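/- arXiv:1802.01977 — 4 statements merged into one kernel-verified Lean document; each statement's English description precedes it below -/
import Mathlib

section
/- Let q be a prime power and n ≥ q a positive integer. Then the probability P_{n,q} that a uniformly random monic polynomial of degree n over F_q has no root in F_q equals (1 − 1/q)^q. -/
open Polynomial Finset

/-- Monic polynomials of degree `m` are equivalent to polynomials of degree `< m`. -/
noncomputable def monicEquivDegreeLT (F : Type*) [Field F] (m : ℕ) :
    {f : F[X] // f.Monic ∧ f.natDegree = m} ≃ Polynomial.degreeLT F m where
  toFun f := ⟨f.1 - X ^ m, by
    rw [Polynomial.mem_degreeLT]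
    have hd : f.1.degree = (X ^ m : F[X]).degree := by
      rw [degree_X_pow, degree_eq_natDegree f.2.1.ne_zero, f.2.2]
    have := Polynomial.degree_sub_lt hd f.2.1.ne_zero
      (by rw [f.2.1.leadingCoeff, leadingCoeff_X_pow])
    rwa [hd, degree_X_pow] at this⟩
  invFun g := ⟨X ^ m + g.1, by
    have hg : g.1.degree < (m : WithBot ℕ) := Polynomial.mem_degreeLT.1 g.2
    have hm : (X ^ m + g.1 : F[X]).Monic := monic_X_pow_add hg
    refine ⟨hm, ?_⟩
    have : (X ^ m + g.1 : F[X]).degree = (m : WithBot ℕ) := by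
      rw [degree_add_eq_left_of_degree_lt (by rwa [degree_X_pow]), degree_X_pow]
    exact natDegree_eq_of_degree_eq_some this⟩
  left_inv f := by ext1; simp
  right_inv g := by ext1; simp

theorem card_monic (F : Type*) [Field F] [Fintype F] (m : ℕ) :
    Nat.card {f : F[X] // f.Monic ∧ f.natDegree = m} = Fintype.card F ^ m := by
  rw [Nat.card_congr ((monicEquivDegreeLT F m).trans (Polynomial.degreeLTEquiv F m).toEquiv)]
  simp [Nat.card_eq_fintype_card]

/-- Let `F` be a finite field with `q` elements and `n ≥ q` a positive integer.
The probability that a uniformly random monic polynomial of degree `n` over `F`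
has no root in `F` equals `(1 - 1/q) ^ q`. -/
theorem prob_no_root_eq (F : Type*) [Field F] [Fintype F]
    (n : ℕ) (hn : Fintype.card F ≤ n) :
    (Nat.card {f : Polynomial F //
        f.Monic ∧ f.natDegree = n ∧ ∀ α : F, f.eval α ≠ 0} : ℝ) /
      (Fintype.card F : ℝ) ^ n =
      (1 - 1 / (Fintype.card F : ℝ)) ^ (Fintype.card F) := by
  classical
  set q := Fintype.card F with hq
  set D : F[X] := ∏ α : F, (X - C α) with hD
  have hDm : D.Monic := monic_prod_of_monic _ _ fun α _ => monic_X_sub_C α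
  have hDdeg : D.natDegree = q := by
    rw [hD, natDegree_prod _ _ fun α _ => X_sub_C_ne_zero α]
    simp only [natDegree_X_sub_C, Finset.sum_const, Finset.card_univ, smul_eq_mul, mul_one]
    rfl
  have hDdeg' : D.degree = (q : WithBot ℕ) := by
    rw [degree_eq_natDegree hDm.ne_zero, hDdeg]
  have hDeval : ∀ α : F, D.eval α = 0 := fun α => by
    rw [hD, eval_prod]
    exact Finset.prod_eq_zero (mem_univ α) (by simp)
  have hinj : Set.InjOn (id : F → F) (Finset.univ : Finset F) := Function.injective_id.injOn
  have hcard : #(Finset.univ : Finset F) = q := rfl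
  have hevalI : ∀ (v : F → F) (α : F),
      (Lagrange.interpolate Finset.univ id v).eval α = v α := fun v α =>
    Lagrange.eval_interpolate_at_node v hinj (mem_univ α)
  -- the key equivalence
  let E : {f : F[X] // f.Monic ∧ f.natDegree = n ∧ ∀ α : F, f.eval α ≠ 0} ≃
      ({h : F[X] // h.Monic ∧ h.natDegree = n - q} × {v : F → F // ∀ α, v α ≠ 0}) :=
  { toFun := fun f =>
      (⟨f.1 /ₘ D, by
        constructor
        · have hdle : D.degree ≤ f.1.degree := by
            rw [hDdeg', degree_eq_natDegree f.2.1.ne_zero, f.2.2.1]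
            exact_mod_cast hn
          have := leadingCoeff_divByMonic_of_monic hDm hdle
          rw [Monic, this, f.2.1.leadingCoeff]
        · rw [natDegree_divByMonic _ hDm, f.2.2.1, hDdeg]⟩,
       ⟨fun α => f.1.eval α, f.2.2.2⟩)
    invFun := fun p => ⟨p.1.1 * D + Lagrange.interpolate Finset.univ id p.2.1, by
      have hR : (Lagrange.interpolate Finset.univ id p.2.1).degree < (q : WithBot ℕ) := by
        have := Lagrange.degree_interpolate_lt p.2.1 hinj
        rwa [hcard] at this
      have hmul : (p.1.1 * D).Monic := p.1.2.1.mul hDm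
      have hmuldeg : (p.1.1 * D).natDegree = n := by
        rw [p.1.2.1.natDegree_mul hDm, p.1.2.2, hDdeg, Nat.sub_add_cancel hn]
      have hmuldeg' : (p.1.1 * D).degree = (n : WithBot ℕ) := by
        rw [degree_eq_natDegree hmul.ne_zero, hmuldeg]
      have hRn : (Lagrange.interpolate Finset.univ id p.2.1).degree < (p.1.1 * D).degree := by
        rw [hmuldeg']
        exact hR.trans_le (by exact_mod_cast hn)
      refine ⟨hmul.add_of_left hRn, ?_, ?_⟩
      · have : (p.1.1 * D + Lagrange.interpolate Finset.univ id p.2.1).degree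
            = (n : WithBot ℕ) := by
          rw [degree_add_eq_left_of_degree_lt hRn, hmuldeg']
        exact natDegree_eq_of_degree_eq_some this
      · intro α
        rw [eval_add, eval_mul, hDeval, mul_zero, zero_add, hevalI]
        exact p.2.2 α⟩
    left_inv := fun f => by
      apply Subtype.ext
      have hmodeval : ∀ α : F, (f.1 %ₘ D).eval α = f.1.eval α := by
        intro α
        conv_rhs => rw [← modByMonic_add_div f.1 D]
        rw [eval_add, eval_mul, hDeval, zero_mul, add_zero]
      have key : Lagrange.interpolate Finset.univ id (fun α => f.1.eval α) = f.1 %ₘ D := by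
        refine (Lagrange.eq_interpolate_of_eval_eq (fun α => f.1.eval α) hinj ?_ ?_).symm
        · rw [hcard]
          exact (degree_modByMonic_lt f.1 hDm).trans_eq hDdeg'
        · intro i _
          exact hmodeval i
      show f.1 /ₘ D * D + Lagrange.interpolate Finset.univ id (fun α => f.1.eval α) = f.1
      rw [key, mul_comm, add_comm, modByMonic_add_div f.1 D]
    right_inv := fun p => by
      have hR : (Lagrange.interpolate Finset.univ id p.2.1).degree < D.degree := by
        rw [hDdeg']
        have := Lagrange.degree_interpolate_lt p.2.1 hinj
        rwa [hcard] at this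
      have hdiv := (div_modByMonic_unique
        (f := p.1.1 * D + Lagrange.interpolate Finset.univ id p.2.1)
        p.1.1 (Lagrange.interpolate Finset.univ id p.2.1)
        hDm ⟨by ring, hR⟩).1
      refine Prod.ext (Subtype.ext ?_) (Subtype.ext ?_)
      · exact hdiv
      · funext α
        show (p.1.1 * D + Lagrange.interpolate Finset.univ id p.2.1).eval α = p.2.1 α
        rw [eval_add, eval_mul, hDeval, mul_zero, zero_add, hevalI] }
  have hv : Nat.card {v : F → F // ∀ α, v α ≠ 0} = (q - 1) ^ q := by
    rw [Nat.card_congr (Equiv.subtypePiEquivPi (α := F) (β := fun _ => F) (p := fun _ b => b ≠ 0))]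
    have h0 : Nat.card {b : F // b ≠ 0} = q - 1 := by
      rw [← Nat.card_congr (unitsEquivNeZero (G₀ := F)), Nat.card_eq_fintype_card,
        Fintype.card_units]
    rw [Nat.card_pi]
    simp only [h0, Finset.prod_const, Finset.card_univ]
    rfl
  rw [Nat.card_congr E, Nat.card_prod, card_monic, hv]
  have h1 : 1 ≤ q := Fintype.card_pos
  have hQ : (0 : ℝ) < (q : ℝ) := by exact_mod_cast Fintype.card_pos
  rw [Nat.cast_mul, Nat.cast_pow, Nat.cast_pow, Nat.cast_sub h1, Nat.cast_one]
  have hQn : (q : ℝ) ^ n = (q : ℝ) ^ (n - q) * (q : ℝ) ^ q := by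
    rw [← pow_add, Nat.sub_add_cancel hn]
  rw [hQn, one_sub_div hQ.ne', div_pow,
    mul_div_mul_left _ _ (pow_ne_zero _ hQ.ne')]
end

section
/- There exists an absolute constant C > 0 such that for every positive integer n and every prime power q, |P_n − P_{n,q}| ≤ C/q, where P_n is the probability that a uniformly random permutation in S_n has no fixed points and P_{n,q} is the probability that a uniformly random monic polynomial of degree n over F_q has no root in F_q. -/
/-- The probability that a uniformly random permutation of `{1,...,n}`
(modeled as `Fin n`) has no fixed points. -/
noncomputable def derangementProb (n : ℕ) : ℝ :=
  ((Finset.univ.filter fun σ : Equiv.Perm (Fin n) => ∀ k, σ k ≠ k).card : ℝ) /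
    (Fintype.card (Equiv.Perm (Fin n)) : ℝ)

/-- The probability that a uniformly random monic polynomial of degree `n`
over the finite field `F` has no root in `F`. -/
noncomputable def noRootProb (F : Type*) [Field F] [Fintype F] (n : ℕ) : ℝ :=
  (Nat.card {f : Polynomial F //
      f.Monic ∧ f.natDegree = n ∧ ∀ α : F, f.eval α ≠ 0} : ℝ) /
    (Fintype.card F : ℝ) ^ n

open Polynomial Finset

namespace DPPC
set_option linter.unusedSectionVars false
set_option maxHeartbeats 1000000

variable {F : Type} [Field F] [Fintype F]

/-- Monic polynomials of degree `m` correspond to polynomials of degree `< m`. -/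
noncomputable def monicEquiv (F : Type) [Field F] (m : ℕ) :
    Polynomial.degreeLT F m ≃ {f : F[X] // f.Monic ∧ f.natDegree = m} where
  toFun g := ⟨X ^ m + g.1, by
    have hg : (g.1 : F[X]).degree < (m : WithBot ℕ) := Polynomial.mem_degreeLT.1 g.2
    have hd : (X ^ m + (g.1 : F[X])).degree = (X ^ m : F[X]).degree := by
      apply degree_add_eq_left_of_degree_lt
      rwa [degree_X_pow]
    constructor
    · unfold Polynomial.Monic
      rw [Polynomial.leadingCoeff, natDegree_eq_of_degree_eq_some (by rw [hd, degree_X_pow])]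
      simp [coeff_X_pow, Polynomial.coeff_eq_zero_of_degree_lt hg]
    · exact natDegree_eq_of_degree_eq_some (by rw [hd, degree_X_pow])⟩
  invFun f := ⟨f.1 - X ^ m, by
    rcases f with ⟨f, hf, hdeg⟩
    rw [Polynomial.mem_degreeLT]
    rcases eq_or_ne f (X ^ m) with rfl | hne
    · simp only [sub_self, degree_zero]; exact WithBot.bot_lt_coe m
    · have : (f - X ^ m).degree < f.degree := by
        apply degree_sub_lt
        · rw [Polynomial.degree_eq_natDegree hf.ne_zero, hdeg, degree_X_pow]
        · exact hf.ne_zero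
        · rw [hf.leadingCoeff, (monic_X_pow m).leadingCoeff]
      calc (f - X^m).degree < f.degree := this
        _ = m := by rw [Polynomial.degree_eq_natDegree hf.ne_zero, hdeg]⟩
  left_inv g := by ext1; simp
  right_inv f := by ext1; simp


noncomputable def coeffMonicEquiv (F : Type) [Field F] (m : ℕ) :
    (Fin m → F) ≃ {f : F[X] // f.Monic ∧ f.natDegree = m} :=
  ((Polynomial.degreeLTEquiv F m).toEquiv.symm).trans (monicEquiv F m)

instance (m : ℕ) : Finite {f : F[X] // f.Monic ∧ f.natDegree = m} :=
  Finite.of_equiv _ (coeffMonicEquiv F m)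

lemma card_monic (m : ℕ) :
    Nat.card {f : F[X] // f.Monic ∧ f.natDegree = m} = Fintype.card F ^ m := by
  rw [← Nat.card_congr (coeffMonicEquiv F m)]
  simp [Nat.card_eq_fintype_card]

lemma le_roots {S : Finset F} {f : F[X]} (hf : f ≠ 0) (h : ∀ α ∈ S, f.eval α = 0) :
    S.val ≤ f.roots := by
  classical
  rw [Multiset.le_iff_count]
  intro a
  by_cases ha : a ∈ S
  · have h1 : S.val.count a = 1 := Multiset.count_eq_one_of_mem S.nodup (by simpa using ha)
    rw [h1, Polynomial.count_roots]
    exact (Polynomial.rootMultiplicity_pos hf).2 (h a ha)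
  · rw [Multiset.count_eq_zero_of_notMem (by simpa using ha)]
    exact Nat.zero_le _

lemma prod_X_sub_C_dvd {S : Finset F} {f : F[X]} (hf : f ≠ 0) (h : ∀ α ∈ S, f.eval α = 0) :
    (∏ α ∈ S, (X - C α)) ∣ f := by
  have h1 : (∏ α ∈ S, (X - C α)) = (S.val.map fun a => X - C a).prod := rfl
  rw [h1]
  exact (Multiset.prod_dvd_prod_of_le (Multiset.map_le_map (le_roots hf h))).trans
    f.prod_multiset_X_sub_C_dvd


lemma card_Aset_le {S : Finset F} {n : ℕ} (h : S.card ≤ n) :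
    Nat.card {f : F[X] // f.Monic ∧ f.natDegree = n ∧ ∀ α ∈ S, f.eval α = 0}
      = Fintype.card F ^ (n - S.card) := by
  classical
  set s : F[X] := ∏ α ∈ S, (X - C α) with hs_def
  have hs : s.Monic := monic_prod_of_monic _ _ fun α _ => monic_X_sub_C α
  have hds : s.natDegree = S.card := by
    rw [hs_def, natDegree_prod _ _ fun α _ => (monic_X_sub_C α).ne_zero]
    simp
  have key : Function.Bijective
      (fun g : {f : F[X] // f.Monic ∧ f.natDegree = n - S.card} =>
        (⟨s * g.1, hs.mul g.2.1, by
            rw [hs.natDegree_mul g.2.1, hds, g.2.2]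
            omega,
          fun α hα => by
            rw [eval_mul, hs_def, eval_prod, Finset.prod_eq_zero hα (by simp), zero_mul]⟩ :
          {f : F[X] // f.Monic ∧ f.natDegree = n ∧ ∀ α ∈ S, f.eval α = 0})) := by
    constructor
    · intro g₁ g₂ hg
      have : s * g₁.1 = s * g₂.1 := congrArg Subtype.val hg
      exact Subtype.ext (mul_left_cancel₀ hs.ne_zero this)
    · rintro ⟨f, hf, hdeg, hroots⟩
      obtain ⟨c, rfl⟩ := prod_X_sub_C_dvd (hf.ne_zero) hroots
      have hc : c.Monic := hs.of_mul_monic_left hf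
      have hdc : c.natDegree = n - S.card := by
        rw [hs.natDegree_mul hc, hds] at hdeg
        omega
      exact ⟨⟨c, hc, hdc⟩, rfl⟩
  rw [Nat.card_congr (Equiv.ofBijective _ key).symm, card_monic]

lemma card_Aset_gt {S : Finset F} {n : ℕ} (h : n < S.card) :
    Nat.card {f : F[X] // f.Monic ∧ f.natDegree = n ∧ ∀ α ∈ S, f.eval α = 0} = 0 := by
  have : IsEmpty {f : F[X] // f.Monic ∧ f.natDegree = n ∧ ∀ α ∈ S, f.eval α = 0} := by
    constructor
    rintro ⟨f, hf, hdeg, hroots⟩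
    have h1 : S.card ≤ Multiset.card f.roots :=
      by simpa using Multiset.card_le_card (le_roots hf.ne_zero hroots)
    have h2 := f.card_roots'
    omega
  simp [Nat.card_of_isEmpty]


lemma key_count (n : ℕ) :
    (Nat.card {f : F[X] // f.Monic ∧ f.natDegree = n ∧ ∀ α : F, f.eval α ≠ 0} : ℝ)
      = ∑ S ∈ (Finset.univ : Finset F).powerset,
          (-1 : ℝ) ^ S.card * (if S.card ≤ n then (Fintype.card F : ℝ) ^ (n - S.card) else 0) := by
  classical
  have : Fintype {f : F[X] // f.Monic ∧ f.natDegree = n} := Fintype.ofFinite _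
  set M := {f : F[X] // f.Monic ∧ f.natDegree = n}
  -- step 1: rewrite LHS as a sum over M
  have e1 : {f : F[X] // f.Monic ∧ f.natDegree = n ∧ ∀ α : F, f.eval α ≠ 0}
      ≃ {x : M // ∀ α : F, (x.1).eval α ≠ 0} :=
    { toFun := fun f => ⟨⟨f.1, f.2.1, f.2.2.1⟩, f.2.2.2⟩
      invFun := fun x => ⟨x.1.1, x.1.2.1, x.1.2.2, x.2⟩
      left_inv := fun f => rfl
      right_inv := fun x => rfl }
  have e2 : ∀ S : Finset F,
      {f : F[X] // f.Monic ∧ f.natDegree = n ∧ ∀ α ∈ S, f.eval α = 0}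
      ≃ {x : M // ∀ α ∈ S, (x.1).eval α = 0} := fun S =>
    { toFun := fun f => ⟨⟨f.1, f.2.1, f.2.2.1⟩, f.2.2.2⟩
      invFun := fun x => ⟨x.1.1, x.1.2.1, x.1.2.2, x.2⟩
      left_inv := fun f => rfl
      right_inv := fun x => rfl }
  have hL : (Nat.card {f : F[X] // f.Monic ∧ f.natDegree = n ∧ ∀ α : F, f.eval α ≠ 0} : ℝ)
      = ∑ x : M, ∏ α : F, ((-(if (x.1).eval α = 0 then (1:ℝ) else 0)) + 1) := by
    rw [Nat.card_congr e1, Nat.card_eq_fintype_card, Fintype.card_subtype, Finset.card_filter]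
    push_cast
    refine Finset.sum_congr rfl fun x _ => ?_
    have : ∀ α : F, ((-(if (x.1).eval α = 0 then (1:ℝ) else 0)) + 1)
        = (if ¬ (x.1).eval α = 0 then (1:ℝ) else 0) := by
      intro α; by_cases hx : (x.1).eval α = 0 <;> simp [hx]
    rw [Finset.prod_congr rfl fun α _ => this α, Fintype.prod_boole]
  rw [hL]
  -- step 2: expand the product
  have hexp : ∀ x : M, (∏ α : F, ((-(if (x.1).eval α = 0 then (1:ℝ) else 0)) + 1))
      = ∑ S ∈ (Finset.univ : Finset F).powerset,
          (-1:ℝ) ^ S.card * (if ∀ α ∈ S, (x.1).eval α = 0 then (1:ℝ) else 0) := by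
    intro x
    rw [Finset.prod_add]
    refine Finset.sum_congr rfl fun S _ => ?_
    rw [Finset.prod_const_one, mul_one]
    rw [show (fun α => (-(if (x.1).eval α = 0 then (1:ℝ) else 0))) = fun α =>
      (-1) * (if (x.1).eval α = 0 then (1:ℝ) else 0) by funext α; ring]
    rw [Finset.prod_mul_distrib, Finset.prod_const, Finset.prod_boole]
    by_cases h : ∀ α ∈ S, (x.1).eval α = 0 <;> simp [h]
  rw [Finset.sum_congr rfl fun x _ => hexp x, Finset.sum_comm]
  refine Finset.sum_congr rfl fun S _ => ?_
  rw [← Finset.mul_sum]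
  congr 1
  -- step 3: count
  have : (∑ x : M, (if ∀ α ∈ S, (x.1).eval α = 0 then (1:ℝ) else 0))
      = ((Finset.univ.filter fun x : M => ∀ α ∈ S, (x.1).eval α = 0).card : ℝ) := by
    rw [Finset.card_filter]; push_cast; rfl
  rw [this, ← Fintype.card_subtype, ← Nat.card_eq_fintype_card, ← Nat.card_congr (e2 S)]
  by_cases hS : S.card ≤ n
  · rw [card_Aset_le hS, if_pos hS]; push_cast; ring
  · rw [card_Aset_gt (by omega), if_neg hS]; push_cast; ring


lemma count_range (n : ℕ) :
    (Nat.card {f : F[X] // f.Monic ∧ f.natDegree = n ∧ ∀ α : F, f.eval α ≠ 0} : ℝ)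
      = ∑ m ∈ range (n+1),
          (-1 : ℝ) ^ m * ((Fintype.card F).choose m : ℝ) * (Fintype.card F : ℝ) ^ (n - m) := by
  classical
  rw [key_count]
  rw [Finset.sum_powerset_apply_card
    (f := fun m => (-1 : ℝ) ^ m * (if m ≤ n then (Fintype.card F : ℝ) ^ (n - m) else 0))]
  rw [Finset.card_univ]
  generalize Fintype.card F = q
  have h1 : ∑ m ∈ range (q+1), q.choose m •
        ((-1 : ℝ) ^ m * (if m ≤ n then (q : ℝ) ^ (n - m) else 0))
      = ∑ m ∈ range (n+q+1), (-1 : ℝ) ^ m * (q.choose m : ℝ) *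
          (if m ≤ n then (q : ℝ) ^ (n - m) else 0) := by
    rw [Finset.sum_subset (show range (q+1) ⊆ range (n+q+1) by
      intro x hx; simp only [mem_range] at *; omega)]
    · refine Finset.sum_congr rfl fun m _ => ?_
      rw [nsmul_eq_mul]; ring
    · intro m hm1 hm2
      simp only [mem_range] at hm1 hm2
      have : q < m := by omega
      rw [Nat.choose_eq_zero_of_lt this]
      simp
  have h2 : ∑ m ∈ range (n+q+1), (-1 : ℝ) ^ m * (q.choose m : ℝ) *
          (if m ≤ n then (q : ℝ) ^ (n - m) else 0)
      = ∑ m ∈ range (n+1), (-1 : ℝ) ^ m * (q.choose m : ℝ) * (q : ℝ) ^ (n - m) := by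
    rw [← Finset.sum_subset (show range (n+1) ⊆ range (n+q+1) by
        intro x hx; simp only [mem_range] at *; omega)
      (by intro m hm1 hm2
          simp only [mem_range] at hm1 hm2
          rw [if_neg (by omega)]
          simp)]
    refine Finset.sum_congr rfl fun m hm => ?_
    rw [if_pos (by simp only [mem_range] at hm; omega)]
  rw [h1, h2]

lemma noRootProb_eq (n : ℕ) :
    noRootProb F n = ∑ m ∈ range (n+1),
      (-1 : ℝ) ^ m * ((Fintype.card F).choose m : ℝ) / (Fintype.card F : ℝ) ^ m := by
  classical
  have hq : (0:ℝ) < (Fintype.card F : ℝ) := by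
    exact_mod_cast Fintype.card_pos
  rw [noRootProb, count_range, Finset.sum_div]
  refine Finset.sum_congr rfl fun m hm => ?_
  have hmn : m ≤ n := by simp only [mem_range] at hm; omega
  have : (Fintype.card F : ℝ) ^ (n - m) * (Fintype.card F : ℝ) ^ m = (Fintype.card F : ℝ) ^ n := by
    rw [← pow_add]; congr 1; omega
  rw [div_eq_div_iff (by positivity) (by positivity), mul_assoc, this]


lemma derangementProb_eq (n : ℕ) :
    derangementProb n = ∑ k ∈ range (n+1), (-1 : ℝ) ^ k / (k.factorial : ℝ) := by
  classical
  have hfilter : (Finset.univ.filter fun σ : Equiv.Perm (Fin n) => ∀ k, σ k ≠ k).card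
      = numDerangements n := by
    rw [← card_derangements_fin_eq_numDerangements, Fintype.card_subtype]
    congr 1
    ext σ
    simp only [Finset.mem_filter, Finset.mem_univ, true_and]
    simp [derangements]
  have hcard : Fintype.card (Equiv.Perm (Fin n)) = n.factorial := by
    simp [Fintype.card_perm]
  rw [derangementProb, hfilter, hcard]
  -- now follow Mathlib's Derangements/Exponential.lean
  rw [← Int.cast_natCast, numDerangements_sum]
  push_cast
  rw [Finset.sum_div]
  refine Finset.sum_congr rfl fun k hk => ?_
  have h_le : k ≤ n := Finset.mem_range_succ_iff.mp hk
  rw [Nat.ascFactorial_eq_div, add_tsub_cancel_of_le h_le]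
  push_cast [Nat.factorial_dvd_factorial h_le]
  field_simp [Nat.factorial_ne_zero]


lemma weierstrass {ι : Type*} (s : Finset ι) (x : ι → ℝ)
    (h0 : ∀ i ∈ s, 0 ≤ x i) (h1 : ∀ i ∈ s, x i ≤ 1) :
    1 - ∑ i ∈ s, x i ≤ ∏ i ∈ s, (1 - x i) := by
  classical
  induction s using Finset.cons_induction with
  | empty => simp
  | cons a s ha ih =>
    rw [Finset.prod_cons, Finset.sum_cons]
    have ihs := ih (fun i hi => h0 i (Finset.mem_cons_of_mem hi))
      (fun i hi => h1 i (Finset.mem_cons_of_mem hi))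
    have ha0 : 0 ≤ x a := h0 a (Finset.mem_cons_self a s)
    have ha1 : x a ≤ 1 := h1 a (Finset.mem_cons_self a s)
    have hs0 : 0 ≤ ∑ i ∈ s, x i :=
      Finset.sum_nonneg fun i hi => h0 i (Finset.mem_cons_of_mem hi)
    nlinarith [mul_nonneg (sub_nonneg.2 ha1) hs0]

lemma prod_one_sub_le_one {ι : Type*} (s : Finset ι) (x : ι → ℝ)
    (h0 : ∀ i ∈ s, 0 ≤ x i) (h1 : ∀ i ∈ s, x i ≤ 1) :
    ∏ i ∈ s, (1 - x i) ≤ 1 :=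
  Finset.prod_le_one (fun i hi => by linarith [h1 i hi]) (fun i hi => by linarith [h0 i hi])

lemma term_bound {q : ℕ} (hq : 1 ≤ q) (k : ℕ) :
    |1 / (k.factorial : ℝ) - (q.choose k : ℝ) / (q : ℝ) ^ k|
      ≤ (k ^ 2 : ℝ) / ((k.factorial : ℝ) * q) := by
  have hqR : (0:ℝ) < q := by exact_mod_cast hq
  have hkf : (0:ℝ) < (k.factorial : ℝ) := by exact_mod_cast k.factorial_pos
  rcases le_or_gt k q with hk | hk
  · -- k ≤ q
    have h0 : ∀ i ∈ range k, 0 ≤ (i : ℝ) / q := fun i _ => by positivity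
    have h1 : ∀ i ∈ range k, (i : ℝ) / q ≤ 1 := fun i hi => by
      rw [div_le_one hqR]
      exact_mod_cast le_of_lt (lt_of_lt_of_le (mem_range.1 hi) hk)
    set A : ℝ := ∏ i ∈ range k, (1 - (i : ℝ) / q) with hA
    have hchoose : (q.choose k : ℝ) / (q : ℝ) ^ k = A / (k.factorial : ℝ) := by
      have hd : (q.descFactorial k : ℝ) = ∏ i ∈ range k, ((q:ℝ) - i) := by
        rw [Nat.descFactorial_eq_prod_range, Nat.cast_prod]
        exact Finset.prod_congr rfl fun i hi => by
          rw [Nat.cast_sub (le_of_lt (lt_of_lt_of_le (mem_range.1 hi) hk))]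
      have hc : (q.descFactorial k : ℝ) = (k.factorial : ℝ) * (q.choose k : ℝ) := by
        exact_mod_cast congrArg Nat.cast (Nat.descFactorial_eq_factorial_mul_choose q k)
      have hAd : A = (q.descFactorial k : ℝ) / (q : ℝ) ^ k := by
        rw [hd, hA]
        rw [show (∏ i ∈ range k, (1 - (i : ℝ) / q)) = ∏ i ∈ range k, ((q:ℝ) - i) / q by
          refine Finset.prod_congr rfl fun i hi => ?_
          field_simp]
        rw [Finset.prod_div_distrib, Finset.prod_const, Finset.card_range]
      rw [hAd, hc]
      field_simp
    rw [hchoose]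
    have hW : 1 - ∑ i ∈ range k, (i:ℝ)/q ≤ A := by
      simpa using weierstrass (range k) (fun i => (i:ℝ)/q) h0 h1
    have hle1 : A ≤ 1 := prod_one_sub_le_one (range k) (fun i => (i:ℝ)/q) h0 h1
    have hsum : ∑ i ∈ range k, (i : ℝ) / q ≤ (k^2 : ℝ) / q := by
      rw [← Finset.sum_div]
      gcongr
      calc ∑ i ∈ range k, (i:ℝ) ≤ ∑ _i ∈ range k, (k:ℝ) :=
            Finset.sum_le_sum fun i hi => by exact_mod_cast le_of_lt (mem_range.1 hi)
        _ = (k:ℝ) * k := by rw [Finset.sum_const, Finset.card_range]; ring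
        _ = (k:ℝ)^2 := by ring
    have h3 : (1 - A) * q ≤ (k:ℝ)^2 := by
      rw [← le_div_iff₀ hqR]
      linarith
    have heq : 1 / (k.factorial:ℝ) - A / k.factorial = (1 - A) / k.factorial := by ring
    rw [abs_of_nonneg (by rw [heq]; exact div_nonneg (by linarith) hkf.le), heq,
      div_le_div_iff₀ hkf (by positivity)]
    push_cast
    nlinarith [hkf.le, h3]
  · -- q < k
    rw [Nat.choose_eq_zero_of_lt hk]
    simp only [Nat.cast_zero, zero_div, sub_zero]
    rw [abs_of_nonneg (by positivity), div_le_div_iff₀ hkf (by positivity)]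
    have hkq : (q:ℝ) < (k:ℝ) := by exact_mod_cast hk
    have h1k : (1:ℝ) ≤ (k:ℝ) := by exact_mod_cast le_trans hq (le_of_lt hk)
    have hkk : (k:ℝ) ≤ (k:ℝ)^2 := by nlinarith [h1k]
    push_cast
    nlinarith [mul_le_mul_of_nonneg_left hkk hkf.le, mul_le_mul_of_nonneg_left hkq.le hkf.le]


lemma sq_two_pow_le : ∀ k : ℕ, k ^ 2 * 2 ^ k ≤ 12 * k.factorial := by
  intro k
  induction k with
  | zero => simp
  | succ m ih =>
    rcases Nat.lt_or_ge m 3 with hm | hm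
    · interval_cases m <;> simp [Nat.factorial]
    · have h1 : 2 * (m + 1) ≤ m ^ 2 := by nlinarith
      have h2 : (m+1)^2 * 2^(m+1) ≤ (m+1) * (m^2 * 2^m) := by
        have : (m+1)^2 * 2^(m+1) = (2 * (m+1)) * ((m+1) * 2^m) := by ring
        rw [this]
        calc (2 * (m+1)) * ((m+1) * 2^m) ≤ m^2 * ((m+1) * 2^m) :=
              Nat.mul_le_mul_right _ h1
          _ = (m+1) * (m^2 * 2^m) := by ring
      calc (m+1)^2 * 2^(m+1) ≤ (m+1) * (m^2 * 2^m) := h2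
        _ ≤ (m+1) * (12 * m.factorial) := Nat.mul_le_mul_left _ ih
        _ = 12 * (m+1).factorial := by rw [Nat.factorial_succ]; ring

lemma sum_sq_div_factorial_le (n : ℕ) :
    ∑ k ∈ range n, ((k:ℝ) ^ 2 / (k.factorial : ℝ)) ≤ 24 := by
  have h1 : ∀ k : ℕ, ((k:ℝ) ^ 2 / (k.factorial : ℝ)) ≤ 12 * (1/2 : ℝ) ^ k := by
    intro k
    have hkf : (0:ℝ) < (k.factorial : ℝ) := by exact_mod_cast k.factorial_pos
    have h2p : (0:ℝ) < (2:ℝ) ^ k := by positivity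
    rw [div_le_iff₀ hkf]
    have := sq_two_pow_le k
    have hc : ((k:ℝ)^2 * (2:ℝ)^k) ≤ 12 * (k.factorial : ℝ) := by exact_mod_cast this
    rw [show (12 : ℝ) * (1/2:ℝ)^k * (k.factorial:ℝ)
        = (12 * (k.factorial:ℝ)) / (2:ℝ)^k by rw [div_pow, one_pow]; ring]
    rw [le_div_iff₀ h2p]
    nlinarith [hc]
  calc ∑ k ∈ range n, ((k:ℝ) ^ 2 / (k.factorial : ℝ))
      ≤ ∑ k ∈ range n, 12 * (1/2 : ℝ) ^ k := Finset.sum_le_sum fun k _ => h1 k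
    _ = 12 * ∑ k ∈ range n, (1/2 : ℝ) ^ k := by rw [Finset.mul_sum]
    _ ≤ 12 * 2 := by
        have := sum_geometric_two_le n
        nlinarith [this]
    _ = 24 := by norm_num


end DPPC

/-- There is an absolute constant `C > 0` such that for every positive integer
`n` and every finite field `F` with `q` elements, `|P_n - P_{n,q}| ≤ C/q`. -/
theorem derangement_poly_prob_close : ∃ C : ℝ, 0 < C ∧
    ∀ (n : ℕ), 0 < n → ∀ (F : Type) [Field F] [Fintype F],
    |derangementProb n - noRootProb F n| ≤ C / (Fintype.card F : ℝ) := by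
  refine ⟨24, by norm_num, fun n _ F _ _ => ?_⟩
  have hq1 : 1 ≤ Fintype.card F := Fintype.card_pos
  have hqR : (0:ℝ) < (Fintype.card F : ℝ) := by exact_mod_cast hq1
  rw [DPPC.derangementProb_eq, DPPC.noRootProb_eq, ← Finset.sum_sub_distrib]
  calc |∑ k ∈ Finset.range (n+1), ((-1:ℝ)^k / (k.factorial : ℝ)
          - (-1:ℝ)^k * ((Fintype.card F).choose k : ℝ) / (Fintype.card F : ℝ)^k)|
      ≤ ∑ k ∈ Finset.range (n+1), |(-1:ℝ)^k / (k.factorial : ℝ)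
          - (-1:ℝ)^k * ((Fintype.card F).choose k : ℝ) / (Fintype.card F : ℝ)^k| :=
        Finset.abs_sum_le_sum_abs _ _
    _ ≤ ∑ k ∈ Finset.range (n+1), ((k:ℝ)^2 / ((k.factorial : ℝ) * (Fintype.card F : ℝ))) := by
        refine Finset.sum_le_sum fun k _ => ?_
        have hsplit : (-1:ℝ)^k / (k.factorial : ℝ)
            - (-1:ℝ)^k * ((Fintype.card F).choose k : ℝ) / (Fintype.card F : ℝ)^k
            = (-1:ℝ)^k * (1 / (k.factorial : ℝ)
              - ((Fintype.card F).choose k : ℝ) / (Fintype.card F : ℝ)^k) := by ring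
        rw [hsplit, abs_mul, abs_pow, abs_neg, abs_one, one_pow, one_mul]
        exact DPPC.term_bound hq1 k
    _ = (∑ k ∈ Finset.range (n+1), ((k:ℝ)^2 / (k.factorial : ℝ))) / (Fintype.card F : ℝ) := by
        rw [Finset.sum_div]
        exact Finset.sum_congr rfl fun k _ => by rw [div_div]
    _ ≤ 24 / (Fintype.card F : ℝ) := by
        gcongr
        exact DPPC.sum_sq_div_factorial_le (n+1)
end

section
/- Let n be a positive integer, j ∈ {1,...,n}, and a a nonnegative integer with j·a ≤ n. Then the probability that a uniformly random permutation σ ∈ S_n has exactly a cycles of length j is at most 1/(j^a · a!). Equivalently, ∑ over tuples b ∈ Ω(n) with b_j = a of ∏_{k=1}^{n} 1/(k^{b_k} b_k!) is at most 1/(j^a a!). -/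
open scoped Classical
set_option linter.unusedSectionVars false

open Finset Function

namespace ProbCycleAux

variable {β : Type*} [Fintype β] [DecidableEq β]

lemma perm_mem_periodicPts (σ : Equiv.Perm β) (x : β) : x ∈ periodicPts ⇑σ :=
  mk_mem_periodicPts (orderOf_pos σ) (by
    show (⇑σ)^[orderOf σ] x = x
    rw [Equiv.Perm.iterate_eq_pow, pow_orderOf_eq_one]
    rfl)

lemma minimalPeriod_eq_of_iterate_eq {f g : β → β} {x : β} {j : ℕ} (hj : 0 < j)
    (hit : ∀ n, f^[n] x = g^[n] x) (hf : minimalPeriod f x = j) :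
    minimalPeriod g x = j := by
  have hgj : IsPeriodicPt g j x := by
    show g^[j] x = x
    rw [← hit]
    exact hf ▸ isPeriodicPt_minimalPeriod f x
  have h1 : minimalPeriod g x ≤ j := hgj.minimalPeriod_le hj
  have h2 : 0 < minimalPeriod g x := hgj.minimalPeriod_pos hj
  have h3 : IsPeriodicPt f (minimalPeriod g x) x := by
    show f^[minimalPeriod g x] x = x
    rw [hit]
    exact isPeriodicPt_minimalPeriod g x
  have h4 : j ≤ minimalPeriod g x := hf ▸ h3.minimalPeriod_le h2
  omega

lemma iterate_subtypePerm (σ : Equiv.Perm β) {p : β → Prop} (h : ∀ x, p (σ x) ↔ p x)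
    (x : {y // p y}) (n : ℕ) :
    (((⇑(σ.subtypePerm h))^[n] x : {y // p y}) : β) = (⇑σ)^[n] (x : β) := by
  induction n with
  | zero => rfl
  | succ n ih =>
    rw [Function.iterate_succ_apply', Function.iterate_succ_apply', ← ih]
    rfl

lemma minimalPeriod_subtypePerm (σ : Equiv.Perm β) {p : β → Prop} (h : ∀ x, p (σ x) ↔ p x)
    (x : {y // p y}) :
    minimalPeriod (⇑(σ.subtypePerm h)) x = minimalPeriod ⇑σ (x : β) := by
  have h2 : 0 < minimalPeriod ⇑σ (x : β) :=
    minimalPeriod_pos_of_mem_periodicPts (perm_mem_periodicPts σ x)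
  have h1 : 0 < minimalPeriod (⇑(σ.subtypePerm h)) x :=
    minimalPeriod_pos_of_mem_periodicPts (perm_mem_periodicPts _ x)
  apply le_antisymm
  · have hper : IsPeriodicPt (⇑(σ.subtypePerm h)) (minimalPeriod ⇑σ (x : β)) x :=
      Subtype.coe_injective
        ((iterate_subtypePerm σ h x _).trans (isPeriodicPt_minimalPeriod ⇑σ (x : β)))
    exact hper.minimalPeriod_le h2
  · have hper : IsPeriodicPt ⇑σ (minimalPeriod (⇑(σ.subtypePerm h)) x) (x : β) := by
      show (⇑σ)^[_] (x : β) = (x : β)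
      rw [← iterate_subtypePerm σ h x]
      exact congrArg Subtype.val (isPeriodicPt_minimalPeriod (⇑(σ.subtypePerm h)) x)
    exact hper.minimalPeriod_le h1

/-- The list `[x₀, π x₀, …, π^(j-1) x₀]`, encoded via the tuple of the last `j-1` entries. -/
def tup (j : ℕ) (π : Equiv.Perm β) (x₀ : β) : Fin (j - 1) → β :=
  fun i => (π ^ ((i : ℕ) + 1)) x₀

def cycList (x₀ : β) (t : Fin (j - 1) → β) : List β := x₀ :: List.ofFn t

variable {j : ℕ}

lemma cycList_length (x₀ : β) (t : Fin (j - 1) → β) (hj : 0 < j) :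
    (cycList x₀ t).length = j := by
  simp only [cycList, List.length_cons, List.length_ofFn]
  omega

section Facts

variable (hj : 0 < j) (π : Equiv.Perm β) (x₀ : β) (hx₀p : Function.minimalPeriod ⇑π x₀ = j)
include hj hx₀p

lemma pow_mod_apply : ∀ k : ℕ, (π ^ (k % j)) x₀ = (π ^ k) x₀ := by
  intro k
  have h := iterate_mod_minimalPeriod_eq (f := ⇑π) (x := x₀) (n := k)
  rw [hx₀p] at h
  exact h

lemma pow_inj_apply : ∀ i k : ℕ, i < j → k < j → (π ^ i) x₀ = (π ^ k) x₀ → i = k := by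
  intro i k hi hk he
  exact iterate_injOn_Iio_minimalPeriod (f := ⇑π) (x := x₀)
    (by rw [hx₀p]; exact hi) (by rw [hx₀p]; exact hk) he

lemma mem_cycList_iff (y : β) :
    y ∈ cycList x₀ (tup j π x₀) ↔ ∃ k, k < j ∧ y = (π ^ k) x₀ := by
  simp only [cycList, List.mem_cons, List.mem_ofFn, Set.mem_range]
  constructor
  · rintro (rfl | ⟨i, rfl⟩)
    · exact ⟨0, hj, by simp⟩
    · exact ⟨(i : ℕ) + 1, by omega, rfl⟩
  · rintro ⟨k, hk, rfl⟩
    rcases Nat.eq_zero_or_pos k with rfl | hk0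
    · left; simp
    · right
      refine ⟨⟨k - 1, by omega⟩, ?_⟩
      show (π ^ ((k - 1) + 1)) x₀ = (π ^ k) x₀
      rw [Nat.sub_add_cancel hk0]

lemma cycList_nodup : (cycList x₀ (tup j π x₀)).Nodup := by
  rw [cycList, List.nodup_cons]
  constructor
  · intro hmem
    rw [List.mem_ofFn] at hmem
    obtain ⟨i, hi⟩ := hmem
    have : (i : ℕ) + 1 = 0 := by
      apply pow_inj_apply hj π x₀ hx₀p _ _ (by omega) hj
      rw [pow_zero]
      exact hi
    omega
  · rw [List.nodup_ofFn]
    intro i k he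
    have : (i : ℕ) + 1 = (k : ℕ) + 1 :=
      pow_inj_apply hj π x₀ hx₀p _ _ (by omega) (by omega) he
    exact Fin.ext (by omega)

lemma cycList_getElem (m : ℕ) (hm : m < (cycList x₀ (tup j π x₀)).length) :
    (cycList x₀ (tup j π x₀))[m] = (π ^ m) x₀ := by
  cases m with
  | zero => simp [cycList]
  | succ m =>
    simp only [cycList] at hm ⊢
    rw [List.getElem_cons_succ, List.getElem_ofFn]
    rfl

lemma formPerm_pow_apply (k : ℕ) :
    ((cycList x₀ (tup j π x₀)).formPerm ^ k) x₀ = (π ^ k) x₀ := by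
  have hnd := cycList_nodup hj π x₀ hx₀p
  show ((x₀ :: List.ofFn (tup j π x₀)).formPerm ^ k) x₀ = (π ^ k) x₀
  rw [List.formPerm_pow_apply_head x₀ _ hnd k]
  have hm : k % (x₀ :: List.ofFn (tup j π x₀)).length < (cycList x₀ (tup j π x₀)).length :=
    Nat.mod_lt _ (by simp)
  show (cycList x₀ (tup j π x₀))[k % (x₀ :: List.ofFn (tup j π x₀)).length]'hm = _
  rw [cycList_getElem hj π x₀ hx₀p]
  have hlen : (x₀ :: List.ofFn (tup j π x₀)).length = j := cycList_length x₀ _ hj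
  rw [hlen, pow_mod_apply hj π x₀ hx₀p]

lemma formPerm_agrees (y : β) (hy : y ∈ cycList x₀ (tup j π x₀)) :
    (cycList x₀ (tup j π x₀)).formPerm y = π y := by
  rw [mem_cycList_iff hj π x₀ hx₀p] at hy
  obtain ⟨k, hk, rfl⟩ := hy
  have h1 := formPerm_pow_apply hj π x₀ hx₀p k
  have h2 := formPerm_pow_apply hj π x₀ hx₀p (k + 1)
  rw [pow_succ', Equiv.Perm.mul_apply, h1] at h2
  rw [h2, pow_succ', Equiv.Perm.mul_apply]

lemma pow_mem_cycList (k : ℕ) : (π ^ k) x₀ ∈ cycList x₀ (tup j π x₀) := by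
  rw [mem_cycList_iff hj π x₀ hx₀p]
  exact ⟨k % j, Nat.mod_lt _ hj, (pow_mod_apply hj π x₀ hx₀p k).symm⟩

end Facts

noncomputable def F (j : ℕ) (s : Finset β) : Finset (Equiv.Perm β) :=
  univ.filter fun π => (∀ x ∈ s, Function.minimalPeriod ⇑π x = j) ∧ ∀ x ∉ s, π x = x

lemma core_aux (hj : 0 < j) :
    ∀ (a : ℕ) (s : Finset β), s.card = j * a →
      (F j s).card * (j ^ a * a.factorial) ≤ (j * a).factorial := by
  intro a
  induction a with
  | zero =>
    intro s hs
    have hs' : s = ∅ := Finset.card_eq_zero.mp (by simpa using hs)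
    subst hs'
    have hsub : F j (∅ : Finset β) ⊆ {1} := by
      intro π hπ
      simp only [F, mem_filter, mem_univ, true_and] at hπ
      rw [mem_singleton]
      exact Equiv.ext fun x => hπ.2 x (by simp)
    have hle := Finset.card_le_card hsub
    simp only [card_singleton] at hle
    calc (F j (∅ : Finset β)).card * (j ^ 0 * Nat.factorial 0)
        = (F j (∅ : Finset β)).card := by simp
      _ ≤ 1 := hle
      _ ≤ (j * 0).factorial := by simp
  | succ a ih =>
    intro s hs
    have hjc : j * (a + 1) = j * a + j := by ring
    obtain ⟨x₀, hx₀⟩ := Finset.card_pos.mp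
      (show 0 < s.card by rw [hs]; exact Nat.mul_pos hj a.succ_pos)
    set T : Finset (Fin (j - 1) → β) :=
      univ.filter (fun t => (cycList x₀ t).Nodup ∧ ∀ i, t i ∈ s.erase x₀) with hT
    have key : (F j s).card ≤ ∑ t ∈ T, (F j (s \ (cycList x₀ t).toFinset)).card := by
      rw [← Finset.card_sigma]
      apply Finset.card_le_card_of_injOn
        (fun π => ⟨tup j π x₀, π * ((cycList x₀ (tup j π x₀)).formPerm)⁻¹⟩)
      · intro π hπ
        rw [Finset.mem_coe] at hπ ⊢
        simp only [F, mem_filter, mem_univ, true_and] at hπ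
        obtain ⟨hper, hfix⟩ := hπ
        have hx₀p : Function.minimalPeriod ⇑π x₀ = j := hper x₀ hx₀
        have hnd : (cycList x₀ (tup j π x₀)).Nodup := cycList_nodup hj π x₀ hx₀p
        have hmaps : ∀ x ∈ s, π x ∈ s := by
          intro x hx
          by_contra hxs
          have h2 : π x = x := π.injective (hfix _ hxs)
          rw [h2] at hxs
          exact hxs hx
        have hpowmem : ∀ k : ℕ, ∀ x ∈ s, (π ^ k) x ∈ s := by
          intro k
          induction k with
          | zero => simp
          | succ k ihk =>
            intro x hx
            rw [pow_succ, Equiv.Perm.mul_apply]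
            exact ihk _ (hmaps x hx)
        have hlsub : ∀ y ∈ cycList x₀ (tup j π x₀), y ∈ s := by
          intro y hy
          rw [mem_cycList_iff hj π x₀ hx₀p] at hy
          obtain ⟨k, _, rfl⟩ := hy
          exact hpowmem k x₀ hx₀
        have hcoff : ∀ y, y ∉ cycList x₀ (tup j π x₀) →
            (π * ((cycList x₀ (tup j π x₀)).formPerm)⁻¹) y = π y := by
          intro y hy
          have h1 : (cycList x₀ (tup j π x₀)).formPerm y = y :=
            List.formPerm_apply_of_notMem hy
          have h2 : ((cycList x₀ (tup j π x₀)).formPerm)⁻¹ y = y := by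
            conv_lhs => rw [← h1]
            exact Equiv.symm_apply_apply _ y
          rw [Equiv.Perm.mul_apply, h2]
        have hcon : ∀ y ∈ cycList x₀ (tup j π x₀),
            (π * ((cycList x₀ (tup j π x₀)).formPerm)⁻¹) y = y := by
          intro y hy
          have hz : ((cycList x₀ (tup j π x₀)).formPerm)⁻¹ y ∈ cycList x₀ (tup j π x₀) := by
            apply (cycList x₀ (tup j π x₀)).mem_of_formPerm_apply_mem
            rw [← Equiv.Perm.mul_apply, mul_inv_cancel, Equiv.Perm.one_apply]
            exact hy
          rw [Equiv.Perm.mul_apply, ← formPerm_agrees hj π x₀ hx₀p _ hz,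
            ← Equiv.Perm.mul_apply, mul_inv_cancel, Equiv.Perm.one_apply]
        have horb : ∀ x, x ∈ s → x ∉ cycList x₀ (tup j π x₀) →
            ∀ k : ℕ, (π ^ k) x ∉ cycList x₀ (tup j π x₀) := by
          intro x hx hxl k hkl
          apply hxl
          rw [mem_cycList_iff hj π x₀ hx₀p] at hkl
          obtain ⟨i, hi, hkeq⟩ := hkl
          have hkN : k ≤ orderOf π * k := Nat.le_mul_of_pos_left k (orderOf_pos π)
          have hNone : π ^ (orderOf π * k) = 1 := by
            rw [pow_mul, pow_orderOf_eq_one, one_pow]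
          have hx' : x = (π ^ (orderOf π * k - k + i)) x₀ := by
            have e1 : (π ^ (orderOf π * k - k)) ((π ^ k) x) = x := by
              rw [← Equiv.Perm.mul_apply, ← pow_add, Nat.sub_add_cancel hkN, hNone]
              rfl
            rw [hkeq, ← Equiv.Perm.mul_apply, ← pow_add] at e1
            exact e1.symm
          rw [hx']
          exact pow_mem_cycList hj π x₀ hx₀p _
        rw [Finset.mem_sigma]
        constructor
        · rw [hT, mem_filter]
          refine ⟨mem_univ _, hnd, fun i => ?_⟩
          rw [mem_erase]
          constructor
          · show (π ^ ((i : ℕ) + 1)) x₀ ≠ x₀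
            intro hcontra
            have h0 : (π ^ ((i : ℕ) + 1)) x₀ = (π ^ 0) x₀ := by rw [pow_zero]; exact hcontra
            have := pow_inj_apply hj π x₀ hx₀p ((i : ℕ) + 1) 0
              (by have := i.isLt; omega) hj h0
            omega
          · show (π ^ ((i : ℕ) + 1)) x₀ ∈ s
            exact hpowmem _ _ hx₀
        · simp only [F, mem_filter, mem_univ, true_and]
          constructor
          · intro x hxmem
            rw [Finset.mem_sdiff] at hxmem
            obtain ⟨hxs, hxl⟩ := hxmem
            rw [List.mem_toFinset] at hxl
            have hiter : ∀ k : ℕ,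
                (⇑(π * ((cycList x₀ (tup j π x₀)).formPerm)⁻¹))^[k] x = (⇑π)^[k] x := by
              intro k
              induction k with
              | zero => rfl
              | succ k ihk =>
                rw [Function.iterate_succ_apply', Function.iterate_succ_apply', ihk]
                have hrfl : (⇑π)^[k] x = (π ^ k) x := rfl
                rw [hrfl]
                exact hcoff _ (horb x hxs hxl k)
            exact minimalPeriod_eq_of_iterate_eq hj (fun n => (hiter n).symm) (hper x hxs)
          · intro x hxmem
            rw [Finset.mem_sdiff, not_and_or] at hxmem
            rcases hxmem with hxs | hxl
            · have hxl' : x ∉ cycList x₀ (tup j π x₀) := fun hc' => hxs (hlsub x hc')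
              rw [hcoff x hxl']
              exact hfix x hxs
            · rw [not_not, List.mem_toFinset] at hxl
              exact hcon x hxl
      · intro π₁ h₁ π₂ h₂ he
        have e1 : tup j π₁ x₀ = tup j π₂ x₀ := congrArg Sigma.fst he
        have e2 : π₁ * ((cycList x₀ (tup j π₁ x₀)).formPerm)⁻¹
            = π₂ * ((cycList x₀ (tup j π₂ x₀)).formPerm)⁻¹ := congrArg (fun q => q.2) he
        rw [e1] at e2
        exact mul_right_cancel e2
    have hfib : ∀ t ∈ T, (F j (s \ (cycList x₀ t).toFinset)).card * (j ^ a * a.factorial)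
        ≤ (j * a).factorial := by
      intro t ht
      apply ih
      rw [hT, mem_filter] at ht
      obtain ⟨-, hnd, hmem⟩ := ht
      have hsub : (cycList x₀ t).toFinset ⊆ s := by
        intro y hy
        have hy' : y ∈ x₀ :: List.ofFn t := List.mem_toFinset.mp hy
        rcases List.mem_cons.mp hy' with rfl | hy''
        · exact hx₀
        · rw [List.mem_ofFn] at hy''
          obtain ⟨i, rfl⟩ := hy''
          exact Finset.mem_of_mem_erase (hmem i)
      have hcard : (cycList x₀ t).toFinset.card = j := by
        rw [List.toFinset_card_of_nodup hnd, cycList_length x₀ t hj]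
      rw [Finset.card_sdiff_of_subset hsub, hcard, hs]
      omega
    have hTcard : T.card ≤ (j * (a + 1) - 1).descFactorial (j - 1) := by
      have hprop : ∀ q : {t // t ∈ T}, (cycList x₀ q.1).Nodup ∧ ∀ i, q.1 i ∈ s.erase x₀ := by
        intro q
        exact (Finset.mem_filter.mp q.2).2
      have hle : Fintype.card {t // t ∈ T}
          ≤ Fintype.card (Fin (j - 1) ↪ {y // y ∈ s.erase x₀}) := by
        apply Fintype.card_le_of_injective (fun q =>
          ⟨fun i => ⟨q.1 i, (hprop q).2 i⟩, fun i₁ i₂ hi => by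
            have hinj : Function.Injective q.1 :=
              List.nodup_ofFn.mp (List.nodup_cons.mp (hprop q).1).2
            exact hinj (congrArg Subtype.val hi)⟩)
        intro q₁ q₂ hq
        apply Subtype.ext
        funext i
        exact congrArg (fun e => ((e : Fin (j - 1) ↪ {y // y ∈ s.erase x₀}) i : β)) hq
      calc T.card = Fintype.card {t // t ∈ T} := (Fintype.card_coe T).symm
        _ ≤ Fintype.card (Fin (j - 1) ↪ {y // y ∈ s.erase x₀}) := hle
        _ = ((s.erase x₀).card).descFactorial (j - 1) := by
            rw [Fintype.card_embedding_eq, Fintype.card_coe, Fintype.card_fin]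
        _ = (j * (a + 1) - 1).descFactorial (j - 1) := by
            rw [Finset.card_erase_of_mem hx₀, hs]
    have hfact : (j * (a + 1) - 1).descFactorial (j - 1) * ((j * a).factorial * (j * (a + 1)))
        = (j * (a + 1)).factorial := by
      obtain ⟨M, hM⟩ : ∃ M, j * (a + 1) = M + 1 := ⟨j * (a + 1) - 1, by omega⟩
      have h1 : j - 1 ≤ M := by omega
      have h2 := Nat.factorial_mul_descFactorial h1
      have h3 : M - (j - 1) = j * a := by omega
      rw [h3] at h2
      rw [hM, Nat.add_sub_cancel, Nat.factorial_succ]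
      calc M.descFactorial (j - 1) * ((j * a).factorial * (M + 1))
          = ((j * a).factorial * M.descFactorial (j - 1)) * (M + 1) := by ring
        _ = M.factorial * (M + 1) := by rw [h2]
        _ = (M + 1) * M.factorial := by ring
    calc (F j s).card * (j ^ (a + 1) * (a + 1).factorial)
        ≤ (∑ t ∈ T, (F j (s \ (cycList x₀ t).toFinset)).card)
            * (j ^ (a + 1) * (a + 1).factorial) := Nat.mul_le_mul_right _ key
      _ = ∑ t ∈ T, (F j (s \ (cycList x₀ t).toFinset)).card
            * ((j ^ a * a.factorial) * (j * (a + 1))) := by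
          rw [Finset.sum_mul]
          exact Finset.sum_congr rfl fun t _ => by rw [pow_succ, Nat.factorial_succ]; ring
      _ ≤ ∑ _t ∈ T, (j * a).factorial * (j * (a + 1)) := by
          apply Finset.sum_le_sum
          intro t ht
          rw [← mul_assoc]
          exact Nat.mul_le_mul_right _ (hfib t ht)
      _ = T.card * ((j * a).factorial * (j * (a + 1))) := by
          rw [Finset.sum_const, smul_eq_mul]
      _ ≤ (j * (a + 1) - 1).descFactorial (j - 1) * ((j * a).factorial * (j * (a + 1))) :=
          Nat.mul_le_mul_right _ hTcard
      _ = (j * (a + 1)).factorial := hfact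

lemma core_univ {a : ℕ} (hj : 0 < j) (hβ : Fintype.card β = j * a) :
    (univ.filter fun π : Equiv.Perm β => ∀ x, Function.minimalPeriod ⇑π x = j).card
      * (j ^ a * a.factorial) ≤ (j * a).factorial := by
  refine le_trans (Nat.mul_le_mul_right _ (Finset.card_le_card ?_))
    (core_aux hj a univ (by simpa using hβ))
  intro π hπ
  simp only [mem_filter, mem_univ, true_and] at hπ
  simp only [F, mem_filter, mem_univ, true_and]
  exact ⟨fun x _ => hπ x, fun x hx => absurd trivial hx⟩

noncomputable def fiber (n j : ℕ) (S : Finset (Fin n)) : Finset (Equiv.Perm (Fin n)) :=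
  univ.filter fun τ => (∀ x, x ∈ S ↔ τ x ∈ S) ∧ ∀ x ∈ S, Function.minimalPeriod ⇑τ x = j

lemma fiber_bound {n j a : ℕ} (hj : 0 < j) (S : Finset (Fin n))
    (hS : S.card = j * a) :
    (fiber n j S).card * (j ^ a * a.factorial)
      ≤ (j * a).factorial * (n - j * a).factorial := by
  set A' : Finset (Equiv.Perm {x : Fin n // x ∈ S}) :=
    univ.filter (fun π => ∀ y, Function.minimalPeriod ⇑π y = j) with hA'
  have hprop : ∀ q : {τ // τ ∈ fiber n j S},
      (∀ x, x ∈ S ↔ q.1 x ∈ S) ∧ ∀ x ∈ S, Function.minimalPeriod ⇑q.1 x = j := fun q =>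
    (Finset.mem_filter.mp q.2).2
  have hcompl : Fintype.card {x : Fin n // x ∉ S} = n - j * a := by
    have h := Fintype.card_subtype_compl (fun x : Fin n => x ∈ S)
    rw [Fintype.card_fin] at h
    rw [h]
    congr 1
    rw [Fintype.card_coe, hS]
  have h1 : (fiber n j S).card = Fintype.card {τ // τ ∈ fiber n j S} :=
    (Fintype.card_coe _).symm
  have h2 : Fintype.card ({π // π ∈ A'} × Equiv.Perm {x : Fin n // x ∉ S})
      = A'.card * (n - j * a).factorial := by
    rw [Fintype.card_prod, Fintype.card_coe, Fintype.card_perm, hcompl]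
  have hinj : Fintype.card {τ // τ ∈ fiber n j S}
      ≤ Fintype.card ({π // π ∈ A'} × Equiv.Perm {x : Fin n // x ∉ S}) := by
    apply Fintype.card_le_of_injective (fun q =>
      (⟨Equiv.Perm.subtypePerm q.1 (fun x => ((hprop q).1 x).symm), by
          simp only [hA', mem_filter, mem_univ, true_and]
          intro y
          rw [minimalPeriod_subtypePerm]
          exact (hprop q).2 y.1 y.2⟩,
        Equiv.Perm.subtypePerm (p := fun x => x ∉ S) q.1 (fun x => not_iff_not.mpr ((hprop q).1 x).symm)))
    intro q₁ q₂ hq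
    apply Subtype.ext
    apply Equiv.ext
    intro x
    by_cases hx : x ∈ S
    · exact congrArg
        (fun p : {π // π ∈ A'} × Equiv.Perm {x : Fin n // x ∉ S} =>
          ((p.1.1 ⟨x, hx⟩ : {x : Fin n // x ∈ S}) : Fin n)) hq
    · exact congrArg
        (fun p : {π // π ∈ A'} × Equiv.Perm {x : Fin n // x ∉ S} =>
          ((p.2 ⟨x, hx⟩ : {x : Fin n // x ∉ S}) : Fin n)) hq
  have hcard1 : (fiber n j S).card ≤ A'.card * (n - j * a).factorial := by
    calc (fiber n j S).card = _ := h1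
      _ ≤ _ := hinj
      _ = _ := h2
  calc (fiber n j S).card * (j ^ a * a.factorial)
      ≤ (A'.card * (n - j * a).factorial) * (j ^ a * a.factorial) :=
        Nat.mul_le_mul_right _ hcard1
    _ = (A'.card * (j ^ a * a.factorial)) * (n - j * a).factorial := by ring
    _ ≤ (j * a).factorial * (n - j * a).factorial :=
        Nat.mul_le_mul_right _ (core_univ hj (by rw [Fintype.card_coe, hS]))

end ProbCycleAux

/-- Let `n` be a positive integer, `j ∈ {1,...,n}` and `a` with `j·a ≤ n`.
The probability that a uniformly random permutation of `n` elements has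
exactly `a` cycles (orbits) of length `j` is at most `1/(j^a · a!)`.
Having exactly `a` orbits of length `j` is expressed by saying that the set of
points whose orbit has size `j` (minimal period `j`) has cardinality `j * a`. -/
theorem prob_cycle_count_le (n j a : ℕ) (hj : j ∈ Finset.Icc 1 n) (hja : j * a ≤ n) :
    ((Finset.univ.filter fun σ : Equiv.Perm (Fin n) =>
        (Finset.univ.filter fun x : Fin n =>
          Function.minimalPeriod σ x = j).card = j * a).card : ℝ) /
      (Nat.factorial n : ℝ) ≤ 1 / ((j : ℝ) ^ a * (Nat.factorial a : ℝ)) := by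
  rw [Finset.mem_Icc] at hj
  obtain ⟨hj1, hjn⟩ := hj
  have hj0 : 0 < j := hj1
  set A := Finset.univ.filter fun σ : Equiv.Perm (Fin n) =>
    (Finset.univ.filter fun x : Fin n =>
      Function.minimalPeriod σ x = j).card = j * a with hA
  have key : A.card * (j ^ a * a.factorial) ≤ n.factorial := by
    have h1 : A.card ≤ ∑ S ∈ Finset.univ.powersetCard (j * a),
        (ProbCycleAux.fiber n j S).card := by
      rw [← Finset.card_sigma]
      apply Finset.card_le_card_of_injOn
        (fun σ => ⟨Finset.univ.filter fun x : Fin n => Function.minimalPeriod σ x = j, σ⟩)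
      · intro σ hσ
        rw [Finset.mem_coe] at hσ ⊢
        simp only [hA, Finset.mem_filter, Finset.mem_univ, true_and] at hσ
        rw [Finset.mem_sigma]
        refine ⟨?_, ?_⟩
        · rw [Finset.mem_powersetCard]
          exact ⟨Finset.subset_univ _, hσ⟩
        · simp only [ProbCycleAux.fiber, Finset.mem_filter, Finset.mem_univ, true_and]
          constructor
          · intro x
            rw [Function.minimalPeriod_apply (ProbCycleAux.perm_mem_periodicPts σ x)]
          · intro x hx
            exact hx
      · intro σ₁ h₁ σ₂ h₂ he
        exact congrArg (fun q => q.2) he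
    have h2 : ∀ S ∈ Finset.univ.powersetCard (j * a),
        (ProbCycleAux.fiber n j S).card * (j ^ a * a.factorial)
          ≤ (j * a).factorial * (n - j * a).factorial := by
      intro S hS
      rw [Finset.mem_powersetCard] at hS
      exact ProbCycleAux.fiber_bound hj0 S hS.2
    calc A.card * (j ^ a * a.factorial)
        ≤ (∑ S ∈ Finset.univ.powersetCard (j * a), (ProbCycleAux.fiber n j S).card)
          * (j ^ a * a.factorial) := Nat.mul_le_mul_right _ h1
      _ = ∑ S ∈ Finset.univ.powersetCard (j * a),
            (ProbCycleAux.fiber n j S).card * (j ^ a * a.factorial) := by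
          rw [Finset.sum_mul]
      _ ≤ ∑ _S ∈ Finset.univ.powersetCard (j * a),
            (j * a).factorial * (n - j * a).factorial := Finset.sum_le_sum h2
      _ = (Finset.univ.powersetCard (j * a)).card
            * ((j * a).factorial * (n - j * a).factorial) := by
          rw [Finset.sum_const, smul_eq_mul]
      _ = n.choose (j * a) * ((j * a).factorial * (n - j * a).factorial) := by
          rw [Finset.card_powersetCard, Finset.card_univ, Fintype.card_fin]
      _ = n.factorial := by
          rw [← Nat.choose_mul_factorial_mul_factorial hja]
          ring
  have hfac : (0 : ℝ) < (n.factorial : ℝ) := by exact_mod_cast n.factorial_pos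
  have hpos : (0 : ℝ) < (j : ℝ) ^ a * (a.factorial : ℝ) := by
    apply mul_pos
    · apply pow_pos
      exact_mod_cast hj0
    · exact_mod_cast a.factorial_pos
  rw [div_le_div_iff₀ hfac hpos, one_mul]
  exact_mod_cast key
end

section
/- There exists an absolute constant C > 0 such that for every positive integer n and every prime power q, the probability that a uniformly random permutation σ ∈ S_n has, for some j ∈ {1,...,n}, strictly more than π_q(j) cycles of length j, is at most C/q. Here π_q(j) is the number of monic irreducible polynomials of degree j over F_q. -/
open scoped Classical

/-- `numIrred F j` is the number of monic irreducible polynomials of degree `j`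
over the field `F` (denoted `π_q(j)` when `#F = q`). -/
noncomputable def numIrred (F : Type*) [Field F] (j : ℕ) : ℕ :=
  Nat.card {p : Polynomial F // p.Monic ∧ Irreducible p ∧ p.natDegree = j}

open Polynomial Finset Function IntermediateField


lemma iter_ne {n : ℕ} (σ : Equiv.Perm (Fin n)) (x : Fin n) {j a b : ℕ}
    (hper : Function.minimalPeriod ⇑σ x = j) (ha : a < j) (hab : a < b) (hb : b < j) :
    (⇑σ)^[a] x ≠ (⇑σ)^[b] x := by
  intro h
  have hinj : Function.Injective ((⇑σ)^[a]) := (σ.injective).iterate a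
  have hb' : (⇑σ)^[b] x = (⇑σ)^[a] ((⇑σ)^[b - a] x) := by
    rw [← Function.iterate_add_apply]
    congr 1
    omega
  have hfix : (⇑σ)^[b - a] x = x := hinj (by rw [← hb', ← h])
  have hle := Function.IsPeriodicPt.minimalPeriod_le (show 0 < b - a by omega) hfix
  rw [hper] at hle
  omega

/-- the orbit sequence of `x` (excluding `x` itself) -/
def orbG {n : ℕ} (j : ℕ) (x : Fin n) (σ : Equiv.Perm (Fin n)) : Fin (j - 1) → Fin n :=
  fun i => (⇑σ)^[(i : ℕ) + 1] x

lemma perm_count (n j : ℕ) (x : Fin n) (hj1 : 1 ≤ j) (hjn : j ≤ n) :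
    (Finset.univ.filter fun σ : Equiv.Perm (Fin n) =>
      Function.minimalPeriod ⇑σ x = j).card ≤ (n - 1).factorial := by
  classical
  set s := Finset.univ.filter fun σ : Equiv.Perm (Fin n) =>
    Function.minimalPeriod ⇑σ x = j with hs
  have hmem : ∀ σ ∈ s, Function.minimalPeriod ⇑σ x = j := by
    intro σ hσ; exact (Finset.mem_filter.mp hσ).2
  -- basic facts about the orbit map
  have hvx : ∀ σ ∈ s, ∀ i : Fin (j - 1), orbG j x σ i ≠ x := by
    intro σ hσ i h
    exact iter_ne σ x (a := 0) (b := (i : ℕ) + 1) (hmem σ hσ) (by omega)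
      (by omega) (by have := i.2; omega) (by simpa [orbG] using h.symm)
  have hvinj : ∀ σ ∈ s, Function.Injective (orbG j x σ) := by
    intro σ hσ i i' h
    by_contra hne
    have hii : (i : ℕ) ≠ (i' : ℕ) := fun hc => hne (Fin.ext hc)
    rcases Nat.lt_or_ge (i : ℕ) (i' : ℕ) with hlt | hge
    · exact iter_ne σ x (a := (i : ℕ) + 1) (b := (i' : ℕ) + 1) (hmem σ hσ)
        (by have := i'.2; omega) (by omega) (by have := i'.2; omega)
        (by simpa [orbG] using h)
    · have hlt : (i' : ℕ) < (i : ℕ) := by omega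
      exact iter_ne σ x (a := (i' : ℕ) + 1) (b := (i : ℕ) + 1) (hmem σ hσ)
        (by have := i.2; omega) (by omega) (by have := i.2; omega)
        (by simpa [orbG] using h.symm)
  -- fiber bound
  have fiber_bound : ∀ v ∈ s.image (orbG j x),
      (s.filter fun σ => orbG j x σ = v).card ≤ (n - j).factorial := by
    intro v hv
    obtain ⟨σ₀, hσ₀s, hσ₀v⟩ := Finset.mem_image.mp hv
    have hvx' : ∀ i : Fin (j - 1), v i ≠ x := by
      intro i; rw [← hσ₀v]; exact hvx σ₀ hσ₀s i
    have hvinj' : Function.Injective v := by rw [← hσ₀v]; exact hvinj σ₀ hσ₀s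
    set pred : Fin n → Prop := fun y => y ≠ x ∧ ∀ i : Fin (j - 1), y ≠ v i with hpred
    -- not-orbit characterization, for each σ in the fiber
    have notOrb : ∀ σ, σ ∈ s.filter (fun σ => orbG j x σ = v) →
        ∀ y, pred y ↔ ∀ k, (⇑σ)^[k] x ≠ y := by
      intro σ hσ y
      have hper : Function.minimalPeriod ⇑σ x = j := hmem σ (Finset.mem_filter.mp hσ).1
      have hvi : ∀ i : Fin (j - 1), (⇑σ)^[(i : ℕ) + 1] x = v i := by
        intro i
        have := (Finset.mem_filter.mp hσ).2
        rw [← this]; rfl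
      constructor
      · rintro ⟨hyx, hyv⟩ k hk
        have hmod : (⇑σ)^[k % j] x = (⇑σ)^[k] x := by
          rw [← hper]; exact Function.iterate_mod_minimalPeriod_eq
        rcases Nat.eq_zero_or_pos (k % j) with h0 | hpos
        · apply hyx
          rw [← hk, ← hmod, h0]
          simp
        · have hlt : k % j < j := Nat.mod_lt _ (by omega)
          refine hyv ⟨k % j - 1, by omega⟩ ?_
          rw [← hvi ⟨k % j - 1, by omega⟩]
          show y = (⇑σ)^[(k % j - 1) + 1] x
          rw [show k % j - 1 + 1 = k % j from by omega, hmod, hk]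
      · intro h
        refine ⟨fun hyx => h 0 (by simpa using hyx.symm), fun i hyv => h ((i : ℕ) + 1) ?_⟩
        rw [hvi i]
        exact hyv.symm
    -- closure of pred under σ
    have hcl : ∀ σ, σ ∈ s.filter (fun σ => orbG j x σ = v) →
        ∀ y, pred y ↔ pred (σ y) := by
      intro σ hσ y
      have hper : Function.minimalPeriod ⇑σ x = j := hmem σ (Finset.mem_filter.mp hσ).1
      have hjx : (⇑σ)^[j] x = x := by rw [← hper]; exact Function.iterate_minimalPeriod
      rw [notOrb σ hσ y, notOrb σ hσ (σ y)]
      constructor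
      · intro h k hk
        have h2 : (⇑σ)^[k + j] x = σ y := by
          rw [Function.iterate_add_apply, hjx]; exact hk
        have h3 : σ ((⇑σ)^[k + j - 1] x) = (⇑σ)^[k + j] x := by
          rw [show k + j = (k + j - 1) + 1 from by omega]
          exact (Function.iterate_succ_apply' (⇑σ) (k + j - 1) x).symm
        exact h (k + j - 1) (σ.injective (h3.trans h2))
      · intro h k hk
        exact h (k + 1) (by rw [Function.iterate_succ_apply']; exact congrArg σ hk)
    -- the injection into permutations of the complement
    set f : Equiv.Perm (Fin n) → Equiv.Perm {y : Fin n // pred y} := fun σ =>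
      if h : ∀ y, pred y ↔ pred (σ y) then σ.subtypePerm (fun y => (h y).symm) else 1 with hf
    have hinjOn : Set.InjOn f (s.filter fun σ => orbG j x σ = v) := by
      intro σ hσ σ' hσ' hff
      simp only [Finset.mem_coe] at hσ hσ'
      have hper : Function.minimalPeriod ⇑σ x = j := hmem σ (Finset.mem_filter.mp hσ).1
      have hper' : Function.minimalPeriod ⇑σ' x = j := hmem σ' (Finset.mem_filter.mp hσ').1
      have hvi : ∀ i : Fin (j - 1), (⇑σ)^[(i : ℕ) + 1] x = v i := by
        intro i; have := (Finset.mem_filter.mp hσ).2; rw [← this]; rfl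
      have hvi' : ∀ i : Fin (j - 1), (⇑σ')^[(i : ℕ) + 1] x = v i := by
        intro i; have := (Finset.mem_filter.mp hσ').2; rw [← this]; rfl
      rw [hf] at hff
      simp only [dif_pos (hcl σ hσ), dif_pos (hcl σ' hσ')] at hff
      have hpt : ∀ y, pred y → σ y = σ' y := by
        intro y hy
        have := congrArg (fun τ : Equiv.Perm {y : Fin n // pred y} => (τ ⟨y, hy⟩ : Fin n)) hff
        simpa [Equiv.Perm.subtypePerm_apply] using this
      have horb : ∀ k, k < j → (⇑σ)^[k] x = (⇑σ')^[k] x := by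
        intro k hk
        rcases Nat.eq_zero_or_pos k with rfl | hpos
        · simp
        · rw [show k = k - 1 + 1 from by omega]
          rw [hvi ⟨k - 1, by omega⟩, hvi' ⟨k - 1, by omega⟩]
      apply Equiv.ext
      intro y
      by_cases hy : pred y
      · exact hpt y hy
      · have hex : ∃ k, (⇑σ)^[k] x = y := by
          by_contra hne
          push_neg at hne
          exact hy ((notOrb σ hσ y).mpr hne)
        obtain ⟨k, hk⟩ := hex
        have hmod : (⇑σ)^[k % j] x = y := by
          rw [← hk]
          conv_rhs => rw [← Function.iterate_mod_minimalPeriod_eq (f := ⇑σ) (x := x) (n := k)]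
          rw [hper]
        set m := k % j with hm
        have hmlt : m < j := Nat.mod_lt _ (by omega)
        have hy1 : σ y = (⇑σ)^[m + 1] x := by
          rw [← hmod]
          exact (Function.iterate_succ_apply' (⇑σ) m x).symm
        have hy2 : σ' y = (⇑σ')^[m + 1] x := by
          rw [← hmod, horb m hmlt]
          exact (Function.iterate_succ_apply' (⇑σ') m x).symm
        rcases eq_or_lt_of_le (show m + 1 ≤ j from hmlt) with he | hlt
        · rw [hy1, hy2, he]
          rw [show (⇑σ)^[j] x = x from by rw [← hper]; exact Function.iterate_minimalPeriod]
          rw [show (⇑σ')^[j] x = x from by rw [← hper']; exact Function.iterate_minimalPeriod]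
        · rw [hy1, hy2, hvi ⟨m, by omega⟩, hvi' ⟨m, by omega⟩]
    have hcard : Fintype.card {y : Fin n // pred y} = n - j := by
      have hiff : ∀ y : Fin n, pred y ↔ ¬ (y ∈ insert x (Finset.image v Finset.univ)) := by
        intro y
        simp only [hpred, Finset.mem_insert, Finset.mem_image, Finset.mem_univ, true_and,
          not_or, not_exists]
        constructor
        · rintro ⟨h1, h2⟩
          exact ⟨h1, fun i hi => h2 i hi.symm⟩
        · rintro ⟨h1, h2⟩
          exact ⟨h1, fun i hi => h2 i hi.symm⟩
      rw [Fintype.card_congr (Equiv.subtypeEquivRight hiff)]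
      rw [Fintype.card_subtype_compl]
      have hB : (insert x (Finset.image v Finset.univ)).card = j := by
        rw [Finset.card_insert_of_notMem (by
          simp only [Finset.mem_image, Finset.mem_univ, true_and, not_exists]
          intro i hi
          exact hvx' i hi)]
        rw [Finset.card_image_of_injective _ hvinj', Finset.card_univ, Fintype.card_fin]
        omega
      rw [Fintype.card_fin]
      congr 1
      exact (Fintype.card_of_subtype _ (fun y => Iff.rfl)).trans hB
    calc (s.filter fun σ => orbG j x σ = v).card
        ≤ (Finset.univ : Finset (Equiv.Perm {y : Fin n // pred y})).card :=
          Finset.card_le_card_of_injOn f (fun _ _ => Finset.mem_univ _) hinjOn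
      _ = (n - j).factorial := by
          rw [Finset.card_univ, Fintype.card_perm, hcard]
  have h1 : s.card ≤ (n - j).factorial * (s.image (orbG j x)).card :=
    Finset.card_le_mul_card_image s _ fiber_bound
  have h2 : (s.image (orbG j x)).card ≤ (n - 1).descFactorial (j - 1) := by
    have key : ∀ v : {v // v ∈ s.image (orbG j x)},
        (∀ i : Fin (j - 1), (v : Fin (j-1) → Fin n) i ≠ x) ∧
          Function.Injective (v : Fin (j-1) → Fin n) := by
      rintro ⟨v, hv⟩
      obtain ⟨σ, hσs, rfl⟩ := Finset.mem_image.mp hv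
      exact ⟨hvx σ hσs, hvinj σ hσs⟩
    let fE : {v // v ∈ s.image (orbG j x)} → (Fin (j - 1) ↪ {y : Fin n // y ≠ x}) := fun vh =>
      ⟨fun i => ⟨vh.1 i, (key vh).1 i⟩, fun i i' hii => (key vh).2 (congrArg Subtype.val hii)⟩
    have finj : Function.Injective fE := by
      intro a b hab
      apply Subtype.ext
      funext i
      have := congrArg (fun e : Fin (j - 1) ↪ {y : Fin n // y ≠ x} => ((e i : {y : Fin n // y ≠ x}) : Fin n)) hab
      exact this
    have := Fintype.card_le_of_injective fE finj
    rw [← Fintype.card_coe (s.image (orbG j x))]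
    refine le_trans this ?_
    rw [Fintype.card_embedding_eq, Fintype.card_fin]
    have : Fintype.card {y : Fin n // y ≠ x} = n - 1 := by
      simp [Fintype.card_subtype_compl]
    rw [this]
  calc s.card ≤ (n - j).factorial * (s.image (orbG j x)).card := h1
    _ ≤ (n - j).factorial * (n - 1).descFactorial (j - 1) :=
        Nat.mul_le_mul_left _ h2
    _ = (n - 1).factorial := by
        have h3 := Nat.factorial_mul_descFactorial (show j - 1 ≤ n - 1 by omega)
        rw [show n - 1 - (j - 1) = n - j from by omega] at h3
        exact h3

lemma finite_monic_irred (F : Type*) [Field F] [Fintype F] (j : ℕ) :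
    Finite {p : Polynomial F // p.Monic ∧ Irreducible p ∧ p.natDegree = j} := by
  apply Finite.of_injective
    (fun p : {p : Polynomial F // p.Monic ∧ Irreducible p ∧ p.natDegree = j} =>
      (fun i : Fin (j + 1) => (p : Polynomial F).coeff i))
  intro p q h
  apply Subtype.ext
  apply Polynomial.ext
  intro k
  rcases le_or_gt k j with hk | hk
  · simpa using congrFun h ⟨k, by omega⟩
  · rw [Polynomial.coeff_eq_zero_of_natDegree_lt (by rw [p.2.2.2]; exact hk),
      Polynomial.coeff_eq_zero_of_natDegree_lt (by rw [q.2.2.2]; exact hk)]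

lemma card_pow_le_numIrred (F : Type*) [Field F] [Fintype F] (j : ℕ) (hj : 1 ≤ j) :
    Fintype.card F ^ j ≤ 2 * (j * numIrred F j) + 2 := by
  classical
  set q := Fintype.card F with hq
  have hq2 : 2 ≤ q := Fintype.one_lt_card
  set p := ringChar F with hp
  haveI : CharP F p := ringChar.charP F
  obtain ⟨m, hpp, hqp⟩ := FiniteField.card F p
  haveI hfp : Fact p.Prime := ⟨hpp⟩
  set E := GaloisField p ((m : ℕ) * j) with hE
  have hmj : (m : ℕ) * j ≠ 0 := by
    have := m.2; positivity
  have hcardE : Nat.card E = p ^ ((m : ℕ) * j) := GaloisField.card p _ hmj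
  haveI : Fintype E := Fintype.ofFinite E
  letI : Algebra (ZMod p) F := ZMod.algebra F p
  haveI hsf : IsSplittingField (ZMod p) F (X ^ p ^ (m : ℕ) - X) :=
    FiniteField.isSplittingField_of_card_eq p m (by rw [← hq]; exact hqp)
  -- divisibility of the defining polynomials
  have hdvd : (X ^ p ^ (m : ℕ) - X : (ZMod p)[X]) ∣ X ^ p ^ ((m : ℕ) * j) - X := by
    have hpm : 1 ≤ p ^ (m : ℕ) := Nat.one_le_pow _ _ hpp.pos
    have hpmj : 1 ≤ p ^ ((m : ℕ) * j) := Nat.one_le_pow _ _ hpp.pos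
    have h1 : (X ^ p ^ (m : ℕ) - X : (ZMod p)[X]) = X * (X ^ (p ^ (m : ℕ) - 1) - 1) := by
      rw [mul_sub, mul_one, ← pow_succ']
      congr 2
      omega
    have h2 : (X ^ p ^ ((m : ℕ) * j) - X : (ZMod p)[X]) = X * (X ^ (p ^ ((m : ℕ) * j) - 1) - 1) := by
      rw [mul_sub, mul_one, ← pow_succ']
      congr 2
      omega
    rw [h1, h2]
    apply mul_dvd_mul_left
    obtain ⟨c, hc⟩ : p ^ (m : ℕ) - 1 ∣ p ^ ((m : ℕ) * j) - 1 := by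
      have := Nat.sub_dvd_pow_sub_pow (p ^ (m : ℕ)) 1 j
      simpa [← pow_mul] using this
    have := sub_dvd_pow_sub_pow (X ^ (p ^ (m : ℕ) - 1) : (ZMod p)[X]) 1 c
    rw [one_pow, ← pow_mul, ← hc] at this
    exact this
  have hsplE : Splits ((X ^ p ^ (m : ℕ) - X : (ZMod p)[X]).map (algebraMap (ZMod p) E)) := by
    have hbig : Splits ((X ^ p ^ ((m : ℕ) * j) - X : (ZMod p)[X]).map (algebraMap (ZMod p) E)) :=
      SplittingField.splits (X ^ p ^ ((m : ℕ) * j) - X : (ZMod p)[X])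
    exact Splits.of_dvd hbig
      (Polynomial.map_ne_zero (FiniteField.X_pow_card_pow_sub_X_ne_zero _ hmj hpp.one_lt))
      (Polynomial.map_dvd _ hdvd)
  letI ψ : F →ₐ[ZMod p] E := IsSplittingField.lift F (X ^ p ^ (m : ℕ) - X) hsplE
  letI : Algebra F E := (ψ.toRingHom).toAlgebra
  haveI : Module.Finite F E := Module.Finite.of_finite
  have hcardE' : Fintype.card E = q ^ j := by
    rw [← Nat.card_eq_fintype_card, hcardE, hq, hqp, ← pow_mul]
  have hrank : Module.finrank F E = j := by
    have hcard2 : Fintype.card E = Fintype.card F ^ Module.finrank F E := by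
      rw [Module.card_fintype (Module.finBasis F E), Fintype.card_fin]
    have key : q ^ j = q ^ Module.finrank F E := by rw [← hcardE', hcard2, hq]
    exact (Nat.pow_right_injective hq2 key).symm
  have hint : ∀ x : E, IsIntegral F x := fun x => IsIntegral.of_finite F x
  have hdvdj : ∀ x : E, (minpoly F x).natDegree ∣ j := by
    intro x
    have h1 : Module.finrank F F⟮x⟯ = (minpoly F x).natDegree :=
      IntermediateField.adjoin.finrank (hint x)
    have h2 : Module.finrank F F⟮x⟯ * Module.finrank F⟮x⟯ E = Module.finrank F E :=
      Module.finrank_mul_finrank F F⟮x⟯ E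
    exact ⟨Module.finrank F⟮x⟯ E, by rw [← h1, h2, hrank]⟩
  have hsmall : ∀ x : E, x ^ q ^ (minpoly F x).natDegree = x := by
    intro x
    haveI : Fintype F⟮x⟯ := Fintype.ofFinite _
    have hcK : Fintype.card F⟮x⟯ = q ^ (minpoly F x).natDegree := by
      rw [Module.card_fintype (Module.finBasis F F⟮x⟯), Fintype.card_fin,
        IntermediateField.adjoin.finrank (hint x), hq]
    have hgen := FiniteField.pow_card (IntermediateField.AdjoinSimple.gen F x)
    rw [hcK] at hgen
    have := congrArg (algebraMap F⟮x⟯ E) hgen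
    rw [map_pow, IntermediateField.AdjoinSimple.algebraMap_gen] at this
    exact this
  -- split E into high/low degree elements
  set S := Finset.univ.filter (fun x : E => (minpoly F x).natDegree = j) with hS
  set Sc := Finset.univ.filter (fun x : E => ¬ (minpoly F x).natDegree = j) with hSc
  have hsplit : S.card + Sc.card = q ^ j := by
    rw [hS, hSc, Finset.card_filter_add_card_filter_not, Finset.card_univ, hcardE']
  -- bound on Sc
  have hSc_sub : Sc ⊆ j.properDivisors.biUnion
      (fun d => Finset.univ.filter (fun x : E => x ^ q ^ d = x)) := by
    intro x hx
    have hne := (Finset.mem_filter.mp hx).2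
    refine Finset.mem_biUnion.mpr ⟨(minpoly F x).natDegree, ?_, ?_⟩
    · rw [Nat.mem_properDivisors]
      exact ⟨hdvdj x, lt_of_le_of_ne (Nat.le_of_dvd (by omega) (hdvdj x)) hne⟩
    · simp [hsmall x]
  have hroot_card : ∀ d, 1 ≤ d →
      (Finset.univ.filter (fun x : E => x ^ q ^ d = x)).card ≤ q ^ d := by
    intro d hd
    have hne0 : (X ^ q ^ d - X : E[X]) ≠ 0 :=
      FiniteField.X_pow_card_pow_sub_X_ne_zero E (by omega) (by omega)
    have hsub : (Finset.univ.filter (fun x : E => x ^ q ^ d = x))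
        ⊆ (X ^ q ^ d - X : E[X]).roots.toFinset := by
      intro x hx
      have hxx := (Finset.mem_filter.mp hx).2
      rw [Multiset.mem_toFinset, Polynomial.mem_roots hne0]
      simp [Polynomial.IsRoot, sub_eq_zero, hxx]
    calc (Finset.univ.filter (fun x : E => x ^ q ^ d = x)).card
        ≤ (X ^ q ^ d - X : E[X]).roots.toFinset.card := Finset.card_le_card hsub
      _ ≤ Multiset.card (X ^ q ^ d - X : E[X]).roots := Multiset.toFinset_card_le _
      _ ≤ (X ^ q ^ d - X : E[X]).natDegree := card_roots' _
      _ = q ^ d := FiniteField.X_pow_card_pow_sub_X_natDegree_eq E (by omega) (by omega)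
  have hSc1 : Sc.card ≤ ∑ d ∈ j.properDivisors, q ^ d := by
    refine le_trans (Finset.card_le_card hSc_sub) (le_trans Finset.card_biUnion_le ?_)
    exact Finset.sum_le_sum fun d hd =>
      hroot_card d (Nat.pos_of_dvd_of_pos (Nat.mem_properDivisors.mp hd).1 (by omega))
  have hPD : ∑ d ∈ j.properDivisors, q ^ d ≤ ∑ d ∈ Finset.Icc 1 (j / 2), q ^ d := by
    apply Finset.sum_le_sum_of_subset
    intro d hd
    rw [Nat.mem_properDivisors] at hd
    obtain ⟨hdvd, hlt⟩ := hd
    have hd1 : 1 ≤ d := Nat.pos_of_dvd_of_pos hdvd (by omega)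
    obtain ⟨c, hc⟩ := hdvd
    have hc2 : 2 ≤ c := by
      rcases Nat.lt_or_ge c 2 with h | h
      · interval_cases c <;> omega
      · exact h
    rw [Finset.mem_Icc]
    refine ⟨hd1, ?_⟩
    rw [Nat.le_div_iff_mul_le (by norm_num)]
    nlinarith
  have hgeom : ∀ M : ℕ, (∑ d ∈ Finset.Icc 1 M, q ^ d) + 2 ≤ 2 * q ^ M := by
    intro M
    induction M with
    | zero => simp
    | succ M ih =>
      rw [Finset.sum_Icc_succ_top (by omega)]
      have h1 : 2 * q ^ M ≤ q ^ (M + 1) := by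
        rw [pow_succ, mul_comm (q ^ M) q]
        exact Nat.mul_le_mul_right _ hq2
      omega
  have hSc2 : 2 * Sc.card ≤ q ^ j + 2 := by
    have h1 : Sc.card + 2 ≤ 2 * q ^ (j / 2) := le_trans (by omega) (hgeom (j / 2))
    have h2 : q ^ (j / 2) * q ^ (j / 2) ≤ q ^ j := by
      rw [← pow_add]
      exact Nat.pow_le_pow_right (by omega) (by omega)
    set t := q ^ (j / 2) with ht
    have h3 : 4 * t ≤ t * t + 6 := by
      rcases Nat.lt_or_ge t 4 with h | h
      · have ht1 : 1 ≤ t := Nat.one_le_pow _ _ (by omega)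
        interval_cases t <;> omega
      · have := Nat.mul_le_mul_right t h
        omega
    omega
  -- bound on S
  have hSb : S.card ≤ j * numIrred F j := by
    have hfib : ∀ P ∈ S.image (fun x => minpoly F x),
        (S.filter (fun x => minpoly F x = P)).card ≤ j := by
      intro P hP
      obtain ⟨x₀, hx₀S, rfl⟩ := Finset.mem_image.mp hP
      have hdeg : (minpoly F x₀).natDegree = j := (Finset.mem_filter.mp hx₀S).2
      have hP0 : minpoly F x₀ ≠ 0 := minpoly.ne_zero (hint x₀)
      have hmap0 : (minpoly F x₀).map (algebraMap F E) ≠ 0 := Polynomial.map_ne_zero hP0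
      have hsub : S.filter (fun x => minpoly F x = minpoly F x₀)
          ⊆ ((minpoly F x₀).map (algebraMap F E)).roots.toFinset := by
        intro y hy
        have hmy : minpoly F y = minpoly F x₀ := (Finset.mem_filter.mp hy).2
        rw [Multiset.mem_toFinset, Polynomial.mem_roots hmap0]
        have haev := minpoly.aeval F y
        rw [hmy] at haev
        simpa [Polynomial.IsRoot, Polynomial.eval_map, ← Polynomial.aeval_def] using haev
      calc (S.filter (fun x => minpoly F x = minpoly F x₀)).card
          ≤ ((minpoly F x₀).map (algebraMap F E)).roots.toFinset.card :=
            Finset.card_le_card hsub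
        _ ≤ Multiset.card ((minpoly F x₀).map (algebraMap F E)).roots :=
            Multiset.toFinset_card_le _
        _ ≤ ((minpoly F x₀).map (algebraMap F E)).natDegree := card_roots' _
        _ = j := by rw [Polynomial.natDegree_map, hdeg]
    have h1 : S.card ≤ j * (S.image (fun x => minpoly F x)).card :=
      Finset.card_le_mul_card_image S j hfib
    have h2 : (S.image (fun x => minpoly F x)).card ≤ numIrred F j := by
      haveI : Finite {p : Polynomial F // p.Monic ∧ Irreducible p ∧ p.natDegree = j} :=
        finite_monic_irred F j
      haveI : Fintype {p : Polynomial F // p.Monic ∧ Irreducible p ∧ p.natDegree = j} :=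
        Fintype.ofFinite _
      have hprops : ∀ P ∈ S.image (fun x => minpoly F x),
          P.Monic ∧ Irreducible P ∧ P.natDegree = j := by
        intro P hP
        obtain ⟨x₀, hx₀S, rfl⟩ := Finset.mem_image.mp hP
        exact ⟨minpoly.monic (hint x₀), minpoly.irreducible (hint x₀),
          (Finset.mem_filter.mp hx₀S).2⟩
      rw [numIrred, Nat.card_eq_fintype_card,
        ← Fintype.card_coe (S.image (fun x => minpoly F x))]
      refine Fintype.card_le_of_injective
        (fun Ph => ⟨Ph.1, hprops Ph.1 Ph.2⟩) ?_
      intro a b hab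
      exact Subtype.ext (by simpa using congrArg Subtype.val hab)
    calc S.card ≤ j * (S.image (fun x => minpoly F x)).card := h1
      _ ≤ j * numIrred F j := Nat.mul_le_mul_left _ h2
  omega

/-- There is an absolute constant `C > 0` such that for every `n ≥ 1` and every
finite field `F` with `q` elements, the probability that a uniformly random
permutation of `n` elements has, for some `j ∈ {1,...,n}`, strictly more than
`π_q(j)` cycles of length `j`, is at most `C/q`.  Having more than `π_q(j)`
orbits of length `j` is expressed by saying that the set of points whose orbit
has size `j` (minimal period `j`) has cardinality greater than `j * π_q(j)`. -/
theorem prob_many_cycles_le : ∃ C : ℝ, 0 < C ∧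
    ∀ (n : ℕ), 0 < n → ∀ (F : Type) [Field F] [Fintype F],
    ((Finset.univ.filter fun σ : Equiv.Perm (Fin n) =>
        ∃ j ∈ Finset.Icc 1 n,
          j * numIrred F j < (Finset.univ.filter fun x : Fin n =>
            Function.minimalPeriod σ x = j).card).card : ℝ) /
      (Nat.factorial n : ℝ) ≤ C / (Fintype.card F : ℝ) := by
  refine ⟨4, by norm_num, ?_⟩
  intro n hn F _ _
  have hq2 : 2 ≤ Fintype.card F := Fintype.one_lt_card
  have hq0R : (0 : ℝ) < (Fintype.card F : ℝ) := by
    have : (0 : ℕ) < Fintype.card F := by omega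
    exact_mod_cast this
  have hf0 : (0 : ℝ) < (n.factorial : ℝ) := by exact_mod_cast n.factorial_pos
  -- union bound in ℕ
  have stepA : (Finset.univ.filter fun σ : Equiv.Perm (Fin n) =>
      ∃ j ∈ Finset.Icc 1 n,
        j * numIrred F j < (Finset.univ.filter fun x : Fin n =>
          Function.minimalPeriod ⇑σ x = j).card).card
      ≤ ∑ j ∈ Finset.Icc 1 n,
        (Finset.univ.filter fun σ : Equiv.Perm (Fin n) =>
          j * numIrred F j < (Finset.univ.filter fun x : Fin n =>
            Function.minimalPeriod ⇑σ x = j).card).card := by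
    refine le_trans (Finset.card_le_card ?_) Finset.card_biUnion_le
    intro σ hσ
    simp only [Finset.mem_filter, Finset.mem_univ, true_and] at hσ
    obtain ⟨j, hj, hlt⟩ := hσ
    simp only [Finset.mem_biUnion]
    refine ⟨j, hj, ?_⟩
    simp only [Finset.mem_filter, Finset.mem_univ, true_and]
    exact hlt
  -- expectation bound in ℕ
  have count_bound : ∀ j ∈ Finset.Icc 1 n,
      ∑ σ : Equiv.Perm (Fin n), (Finset.univ.filter fun x : Fin n =>
        Function.minimalPeriod ⇑σ x = j).card ≤ n.factorial := by
    intro j hj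
    rw [Finset.mem_Icc] at hj
    have hswap : ∑ σ : Equiv.Perm (Fin n), (Finset.univ.filter fun x : Fin n =>
        Function.minimalPeriod ⇑σ x = j).card
        = ∑ x : Fin n, (Finset.univ.filter fun σ : Equiv.Perm (Fin n) =>
          Function.minimalPeriod ⇑σ x = j).card := by
      simp only [Finset.card_filter]
      rw [Finset.sum_comm]
    rw [hswap]
    calc ∑ x : Fin n, (Finset.univ.filter fun σ : Equiv.Perm (Fin n) =>
          Function.minimalPeriod ⇑σ x = j).card
        ≤ ∑ _x : Fin n, (n - 1).factorial :=
          Finset.sum_le_sum fun x _ => perm_count n j x hj.1 hj.2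
      _ = n * (n - 1).factorial := by
          rw [Finset.sum_const, Finset.card_univ, Fintype.card_fin, smul_eq_mul]
      _ = n.factorial := Nat.mul_factorial_pred hn.ne'
  -- Markov bound in ℕ
  have stepB : ∀ j ∈ Finset.Icc 1 n,
      (Finset.univ.filter fun σ : Equiv.Perm (Fin n) =>
        j * numIrred F j < (Finset.univ.filter fun x : Fin n =>
          Function.minimalPeriod ⇑σ x = j).card).card * (j * numIrred F j + 1)
        ≤ n.factorial := by
    intro j hj
    have h1 : (Finset.univ.filter fun σ : Equiv.Perm (Fin n) =>
        j * numIrred F j < (Finset.univ.filter fun x : Fin n =>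
          Function.minimalPeriod ⇑σ x = j).card).card • (j * numIrred F j + 1)
        ≤ ∑ σ ∈ (Finset.univ.filter fun σ : Equiv.Perm (Fin n) =>
          j * numIrred F j < (Finset.univ.filter fun x : Fin n =>
            Function.minimalPeriod ⇑σ x = j).card),
          (Finset.univ.filter fun x : Fin n =>
            Function.minimalPeriod ⇑σ x = j).card :=
      Finset.card_nsmul_le_sum _ _ _ (fun σ hσ => (Finset.mem_filter.mp hσ).2)
    have h2 : ∑ σ ∈ (Finset.univ.filter fun σ : Equiv.Perm (Fin n) =>
          j * numIrred F j < (Finset.univ.filter fun x : Fin n =>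
            Function.minimalPeriod ⇑σ x = j).card),
          (Finset.univ.filter fun x : Fin n =>
            Function.minimalPeriod ⇑σ x = j).card
        ≤ ∑ σ : Equiv.Perm (Fin n), (Finset.univ.filter fun x : Fin n =>
            Function.minimalPeriod ⇑σ x = j).card :=
      Finset.sum_le_sum_of_subset (Finset.filter_subset _ _)
    rw [smul_eq_mul] at h1
    exact le_trans h1 (le_trans h2 (count_bound j hj))
  -- per-j real bound
  have hBj : ∀ j ∈ Finset.Icc 1 n,
      ((Finset.univ.filter fun σ : Equiv.Perm (Fin n) =>
        j * numIrred F j < (Finset.univ.filter fun x : Fin n =>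
          Function.minimalPeriod ⇑σ x = j).card).card : ℝ)
      ≤ (n.factorial : ℝ) * (2 / (Fintype.card F : ℝ) ^ j) := by
    intro j hj
    have hj1 : 1 ≤ j := (Finset.mem_Icc.mp hj).1
    have hfield := card_pow_le_numIrred F j hj1
    have hB := stepB j hj
    set a : ℝ := ((Finset.univ.filter fun σ : Equiv.Perm (Fin n) =>
      j * numIrred F j < (Finset.univ.filter fun x : Fin n =>
        Function.minimalPeriod ⇑σ x = j).card).card : ℝ) with ha
    have ha0 : 0 ≤ a := by positivity
    have hP0 : (0 : ℝ) < (j * numIrred F j + 1 : ℕ) := by positivity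
    have h1 : a * ((j * numIrred F j + 1 : ℕ) : ℝ) ≤ (n.factorial : ℝ) := by
      rw [ha, ← Nat.cast_mul]
      exact_mod_cast hB
    have h2 : ((Fintype.card F : ℝ)) ^ j ≤ 2 * ((j * numIrred F j + 1 : ℕ) : ℝ) := by
      push_cast
      have : (Fintype.card F : ℝ) ^ j ≤ ((2 * (j * numIrred F j) + 2 : ℕ) : ℝ) := by
        exact_mod_cast hfield
      push_cast at this
      linarith
    have hqj : (0 : ℝ) < (Fintype.card F : ℝ) ^ j := by positivity
    rw [show (n.factorial : ℝ) * (2 / (Fintype.card F : ℝ) ^ j)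
      = 2 * (n.factorial : ℝ) / (Fintype.card F : ℝ) ^ j by ring, le_div_iff₀ hqj]
    nlinarith [mul_le_mul_of_nonneg_left h2 ha0, h1]
  -- geometric sum
  have hgeomR : ∑ j ∈ Finset.Icc 1 n, (2 / (Fintype.card F : ℝ) ^ j)
      ≤ 4 / (Fintype.card F : ℝ) := by
    set r : ℝ := 1 / (Fintype.card F : ℝ) with hr
    have hr0 : 0 ≤ r := by positivity
    have hr1 : r ≤ 1 / 2 := by
      rw [hr, div_le_div_iff₀ hq0R two_pos]
      have : (2 : ℝ) ≤ (Fintype.card F : ℝ) := by exact_mod_cast hq2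
      linarith
    have hterm : ∀ j : ℕ, 2 / (Fintype.card F : ℝ) ^ j = 2 * r ^ j := by
      intro j
      rw [hr, one_div, inv_pow]
      ring
    have hind : ∀ M : ℕ, ∑ j ∈ Finset.Icc 1 M, 2 * r ^ j ≤ 4 * r - 4 * r ^ (M + 1) := by
      intro M
      induction M with
      | zero =>
        rw [show Finset.Icc 1 0 = (∅ : Finset ℕ) from rfl]
        simp [pow_one]
      | succ M ih =>
        rw [Finset.sum_Icc_succ_top (by omega)]
        have hrp : 0 ≤ r ^ (M + 1) := pow_nonneg hr0 _
        have h1 : r ^ (M + 1 + 1) = r * r ^ (M + 1) := by ring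
        have h2 : 2 * r ^ (M + 1) + 4 * (r * r ^ (M + 1)) ≤ 4 * r ^ (M + 1) := by
          nlinarith
        rw [h1] at *
        linarith
    calc ∑ j ∈ Finset.Icc 1 n, (2 / (Fintype.card F : ℝ) ^ j)
        = ∑ j ∈ Finset.Icc 1 n, 2 * r ^ j :=
          Finset.sum_congr rfl fun j _ => hterm j
      _ ≤ 4 * r - 4 * r ^ (n + 1) := hind n
      _ ≤ 4 * r := by nlinarith [pow_nonneg hr0 (n + 1)]
      _ = 4 / (Fintype.card F : ℝ) := by rw [hr]; ring
  -- assemble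
  have hmain : ((Finset.univ.filter fun σ : Equiv.Perm (Fin n) =>
      ∃ j ∈ Finset.Icc 1 n,
        j * numIrred F j < (Finset.univ.filter fun x : Fin n =>
          Function.minimalPeriod ⇑σ x = j).card).card : ℝ)
      ≤ (n.factorial : ℝ) * (4 / (Fintype.card F : ℝ)) := by
    calc ((Finset.univ.filter fun σ : Equiv.Perm (Fin n) =>
        ∃ j ∈ Finset.Icc 1 n,
          j * numIrred F j < (Finset.univ.filter fun x : Fin n =>
            Function.minimalPeriod ⇑σ x = j).card).card : ℝ)
        ≤ ∑ j ∈ Finset.Icc 1 n,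
          ((Finset.univ.filter fun σ : Equiv.Perm (Fin n) =>
            j * numIrred F j < (Finset.univ.filter fun x : Fin n =>
              Function.minimalPeriod ⇑σ x = j).card).card : ℝ) := by
          exact_mod_cast stepA
      _ ≤ ∑ j ∈ Finset.Icc 1 n, (n.factorial : ℝ) * (2 / (Fintype.card F : ℝ) ^ j) :=
          Finset.sum_le_sum hBj
      _ = (n.factorial : ℝ) * ∑ j ∈ Finset.Icc 1 n, (2 / (Fintype.card F : ℝ) ^ j) := by
          rw [Finset.mul_sum]
      _ ≤ (n.factorial : ℝ) * (4 / (Fintype.card F : ℝ)) :=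
          mul_le_mul_of_nonneg_left hgeomR (by positivity)
  rw [div_le_div_iff₀ hf0 hq0R]
  have h4 : (n.factorial : ℝ) * (4 / (Fintype.card F : ℝ)) * (Fintype.card F : ℝ)
      = 4 * (n.factorial : ℝ) := by field_simp
  linarith [mul_le_mul_of_nonneg_right hmain (le_of_lt hq0R), h4]
end
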